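/- arXiv:1404.6877 — 3 statements merged into one kernel-verified Lean document; each statement's English description precedes it below -/
import Mathlib

section
/- Let A ∈ SL(2,ℤ) with tr A > 2 and let φ be an automorphism of Γ_A = ℤ² ⋊_A ℤ. Then φ maps the subgroup ℤ² × {0} onto itself, and φ(t) = (p, ε) for some p ∈ ℤ² and ε ∈ {1, −1}. Moreover, if ε = −1 and the automorphism of ℤ² induced by φ on ℤ² × {0} has determinant 1, then R(φ) = 4; in all other cases R(φ) is infinite. -/
/-- Two elements `x, y` of a group `G` are `φ`-twisted conjugate if
`y = g * x * (φ g)⁻¹` for some `g : G`. -/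
def twistedConj {G : Type*} [Group G] (φ : G →* G) (x y : G) : Prop :=
  ∃ g : G, y = g * x * (φ g)⁻¹

/-- The Reidemeister number of `φ` : the cardinality of the set of
`φ`-twisted conjugacy classes. -/
noncomputable def reidemeisterNumber {G : Type*} [Group G] (φ : G →* G) : Cardinal :=
  Cardinal.mk (Quot (twistedConj φ))

/-- The additive automorphism of `ℤ²` given by an invertible `2 × 2` integer matrix. -/
def mulVecAut (U : (Matrix (Fin 2) (Fin 2) ℤ)ˣ) : AddAut (Fin 2 → ℤ) where
  toFun v := (U : Matrix (Fin 2) (Fin 2) ℤ).mulVec v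
  invFun v := ((U⁻¹ : (Matrix (Fin 2) (Fin 2) ℤ)ˣ) : Matrix (Fin 2) (Fin 2) ℤ).mulVec v
  left_inv v := by
    simp only [Matrix.mulVec_mulVec, Units.inv_mul, Matrix.one_mulVec]
  right_inv v := by
    simp only [Matrix.mulVec_mulVec, Units.mul_inv, Matrix.one_mulVec]
  map_add' v w := Matrix.mulVec_add _ v w

/-- The semidirect product `ℤ² ⋊_U ℤ`, where `(x, m) * (y, n) = (x + U^m y, m + n)`. -/
abbrev GammaGrp (U : (Matrix (Fin 2) (Fin 2) ℤ)ˣ) :=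
  SemidirectProduct (Multiplicative (Fin 2 → ℤ)) (Multiplicative ℤ)
    (zpowersHom (MulAut (Multiplicative (Fin 2 → ℤ)))
      (AddEquiv.toMultiplicative (mulVecAut U)))

namespace Stmt0Aux

open SemidirectProduct Multiplicative

/-- `mulVecAut` as a monoid hom. -/
def mulVecAutHom : (Matrix (Fin 2) (Fin 2) ℤ)ˣ →* MulAut (Multiplicative (Fin 2 → ℤ)) :=
  MonoidHom.mk' (fun u => AddEquiv.toMultiplicative (mulVecAut u)) (by
    intro a b
    refine MulEquiv.ext fun v => ?_
    show ofAdd (((a * b : (Matrix (Fin 2) (Fin 2) ℤ)ˣ) : Matrix (Fin 2) (Fin 2) ℤ).mulVec (toAdd v))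
      = ofAdd ((a : Matrix (Fin 2) (Fin 2) ℤ).mulVec ((b : Matrix (Fin 2) (Fin 2) ℤ).mulVec (toAdd v)))
    rw [Units.val_mul, Matrix.mulVec_mulVec])

variable (U : (Matrix (Fin 2) (Fin 2) ℤ)ˣ)

lemma act_eval (m : ℤ) (w : Fin 2 → ℤ) :
    (zpowersHom (MulAut (Multiplicative (Fin 2 → ℤ)))
      (AddEquiv.toMultiplicative (mulVecAut U)) (ofAdd m)) (ofAdd w)
    = ofAdd (((U ^ m : (Matrix (Fin 2) (Fin 2) ℤ)ˣ) : Matrix (Fin 2) (Fin 2) ℤ).mulVec w) := by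
  have h1 : (AddEquiv.toMultiplicative (mulVecAut U)) ^ m
      = mulVecAutHom (U ^ m) := by
    rw [map_zpow]; rfl
  rw [zpowersHom_apply, toAdd_ofAdd, h1]
  rfl

end Stmt0Aux

namespace Stmt0Aux2
open SemidirectProduct Multiplicative Stmt0Aux

variable (U : (Matrix (Fin 2) (Fin 2) ℤ)ˣ)

/-- The element `(v, m)` of `Γ`. -/
def γ (v : Fin 2 → ℤ) (m : ℤ) : GammaGrp U := ⟨ofAdd v, ofAdd m⟩

local notation "Apow" m => ((U ^ (m : ℤ) : (Matrix (Fin 2) (Fin 2) ℤ)ˣ) : Matrix (Fin 2) (Fin 2) ℤ)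

@[simp] lemma γ_left (v m) : (γ U v m).left = ofAdd v := rfl
@[simp] lemma γ_right (v m) : (γ U v m).right = ofAdd m := rfl

lemma γ_mul (v m w n) : γ U v m * γ U w n = γ U (v + (Apow m).mulVec w) (m + n) := by
  unfold γ
  rw [SemidirectProduct.mul_def]
  congr 1
  rw [act_eval]; rfl

lemma γ_one : γ U 0 0 = 1 := rfl

lemma γ_inv (v m) : (γ U v m)⁻¹ = γ U (-(Apow (-m)).mulVec v) (-m) := by
  rw [eq_comm, eq_inv_iff_mul_eq_one, γ_mul]
  rw [neg_add_cancel, neg_add_cancel, γ_one]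

lemma γ_inj {v m w n} : γ U v m = γ U w n ↔ v = w ∧ m = n := by
  unfold γ
  constructor
  · intro h
    injection h with h1 h2
    exact ⟨by simpa using h1, by simpa using h2⟩
  · rintro ⟨rfl, rfl⟩; rfl

lemma eq_γ (g : GammaGrp U) : g = γ U (toAdd g.left) (toAdd g.right) := rfl

@[simp] lemma rightHom_γ (v m) : rightHom (γ U v m) = ofAdd m := rfl

lemma γ_inl (v) : (inl (ofAdd v) : GammaGrp U) = γ U v 0 := by
  unfold γ; ext <;> rfl

lemma γ_inr (m) : (inr (ofAdd m) : GammaGrp U) = γ U 0 m := by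
  unfold γ; ext <;> rfl

lemma inr_zpow (m : ℤ) : (inr (ofAdd m) : GammaGrp U) = (inr (ofAdd (1:ℤ)))^m := by
  rw [← map_zpow]
  congr 1
  rw [← ofAdd_zsmul]
  norm_num

lemma γ_zpow_n (v : Fin 2 → ℤ) (n : ℕ) : (γ U v 0)^n = γ U (n • v) 0 := by
  induction n with
  | zero => simp [γ_one]
  | succ k ih =>
    rw [pow_succ, ih, γ_mul, γ_inj]
    constructor
    · rw [zpow_zero, Units.val_one, Matrix.one_mulVec, succ_nsmul]
    · ring

end Stmt0Aux2

namespace Stmt0Aux3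
open SemidirectProduct Multiplicative Stmt0Aux Stmt0Aux2
open scoped commutatorElement

/-- The underlying matrix. -/
abbrev Am (U : (Matrix (Fin 2) (Fin 2) ℤ)ˣ) : Matrix (Fin 2) (Fin 2) ℤ := U

variable (U : (Matrix (Fin 2) (Fin 2) ℤ)ˣ)

lemma comm_eval (w : Fin 2 → ℤ) :
    ⁅γ U 0 1, γ U w 0⁆ = γ U ((Am U).mulVec w - w) 0 := by
  rw [commutatorElement_def, γ_inv, γ_inv, γ_mul, γ_mul, γ_mul, γ_inj]
  constructor
  · simp only [Matrix.mulVec_neg, Matrix.mulVec_mulVec, Matrix.mulVec_zero, ← Units.val_mul,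
      ← zpow_add]
    norm_num
    abel_nf
    simp
  · ring

lemma det_sub_one (hdet : (Am U).det = 1) :
    ((Am U) - 1).det = 2 - (Am U).trace := by
  rw [Matrix.det_fin_two] at hdet ⊢
  rw [Matrix.trace_fin_two]
  simp only [Matrix.sub_apply, Matrix.one_apply_eq, Matrix.one_apply_ne (by decide : (0:Fin 2) ≠ 1),
    Matrix.one_apply_ne (by decide : (1:Fin 2) ≠ 0)]
  ring_nf
  linarith [hdet]

lemma mem_inl_iff (hdet : (Am U).det = 1) (htr : 2 < (Am U).trace) (g : GammaGrp U) :
    g ∈ (inl : Multiplicative (Fin 2 → ℤ) →* GammaGrp U).range ↔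
      ∃ n : ℕ, 0 < n ∧ g ^ n ∈ commutator (GammaGrp U) := by
  constructor
  · rintro ⟨x, rfl⟩
    set v : Fin 2 → ℤ := toAdd x with hv
    have hx : (inl x : GammaGrp U) = γ U v 0 := by rw [hv, ← γ_inl]; rfl
    refine ⟨((Am U).trace - 2).toNat, by omega, ?_⟩
    set w : Fin 2 → ℤ := -(((Am U) - 1).adjugate.mulVec v) with hw
    have key : ((((Am U).trace - 2).toNat : ℕ) : ℤ) • v = (Am U).mulVec w - w := by
      have h1 : (Am U).mulVec w - w = ((Am U) - 1).mulVec w := by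
        rw [Matrix.sub_mulVec, Matrix.one_mulVec]
      rw [h1, hw, Matrix.mulVec_neg, Matrix.mulVec_mulVec, Matrix.mul_adjugate,
        det_sub_one U hdet, Matrix.smul_mulVec, Matrix.one_mulVec,
        Int.toNat_of_nonneg (by omega), ← neg_smul]
      congr 1
      ring
    have hpow : (inl x : GammaGrp U) ^ (((Am U).trace - 2).toNat) = ⁅γ U 0 1, γ U w 0⁆ := by
      rw [hx, γ_zpow_n, comm_eval, γ_inj]
      refine ⟨?_, rfl⟩
      rw [← key, natCast_zsmul]
    rw [hpow, commutator_def]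
    exact Subgroup.commutator_mem_commutator (Subgroup.mem_top _) (Subgroup.mem_top _)
  · rintro ⟨n, hn, hgn⟩
    rw [range_inl_eq_ker_rightHom, MonoidHom.mem_ker]
    have h1 : rightHom (g ^ n) = 1 :=
      Abelianization.commutator_subset_ker rightHom hgn
    rw [map_pow] at h1
    have h2 : (toAdd (rightHom g)) * n = 0 := by
      have := congrArg toAdd h1
      rw [toAdd_pow] at this
      simpa [mul_comm] using this
    have h3 : toAdd (rightHom g) = 0 := by
      rcases mul_eq_zero.mp h2 with h | h
      · exact h
      · exfalso; omega
    have : rightHom g = ofAdd (0 : ℤ) := by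
      rw [← h3]; rfl
    rw [this]; rfl

lemma apply_mem_inl (hdet : (Am U).det = 1) (htr : 2 < (Am U).trace)
    (ψ : GammaGrp U ≃* GammaGrp U) (g : GammaGrp U)
    (hg : g ∈ (inl : Multiplicative (Fin 2 → ℤ) →* GammaGrp U).range) :
    ψ g ∈ (inl : Multiplicative (Fin 2 → ℤ) →* GammaGrp U).range := by
  rw [mem_inl_iff U hdet htr] at hg ⊢
  obtain ⟨n, hn, hc⟩ := hg
  refine ⟨n, hn, ?_⟩
  have hfix : (commutator (GammaGrp U)).comap ψ.toMonoidHom = commutator (GammaGrp U) :=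
    Subgroup.characteristic_iff_comap_eq.mp inferInstance ψ
  rw [← hfix] at hc
  rw [← map_pow]
  exact Subgroup.mem_comap.mp hc

lemma map_inl (hdet : (Am U).det = 1) (htr : 2 < (Am U).trace)
    (ψ : GammaGrp U ≃* GammaGrp U) :
    Subgroup.map ψ.toMonoidHom (inl : Multiplicative (Fin 2 → ℤ) →* GammaGrp U).range
      = (inl : Multiplicative (Fin 2 → ℤ) →* GammaGrp U).range := by
  apply le_antisymm
  · rintro _ ⟨g, hg, rfl⟩
    exact apply_mem_inl U hdet htr ψ g hg
  · intro g hg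
    exact ⟨ψ.symm g, apply_mem_inl U hdet htr ψ.symm g hg, by simp⟩

end Stmt0Aux3

namespace Stmt0Aux4
open SemidirectProduct Multiplicative Stmt0Aux Stmt0Aux2 Stmt0Aux3

variable (U : (Matrix (Fin 2) (Fin 2) ℤ)ˣ)

lemma single_decomp (v : Fin 2 → ℤ) :
    v = v 0 • Pi.single (0 : Fin 2) (1:ℤ) + v 1 • Pi.single (1 : Fin 2) (1:ℤ) := by
  funext i
  fin_cases i <;> simp

lemma mulVec_ext {M N : Matrix (Fin 2) (Fin 2) ℤ}
    (h : ∀ v, M.mulVec v = N.mulVec v) : M = N := by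
  ext i j
  have := congrFun (h (Pi.single j 1)) i
  rw [Matrix.mulVec_single, Matrix.mulVec_single] at this
  simpa using this

lemma γ_mul_zero (v w : Fin 2 → ℤ) : γ U v 0 * γ U w 0 = γ U (v + w) 0 := by
  rw [γ_mul, γ_inj]
  constructor
  · rw [zpow_zero, Units.val_one, Matrix.one_mulVec]
  · ring

section psi

variable (ψ : GammaGrp U ≃* GammaGrp U)

/-- The map induced by `ψ` on `ℤ²`. -/
def leftOf (v : Fin 2 → ℤ) : Fin 2 → ℤ := toAdd ((ψ (γ U v 0)).left)

lemma psi_inl (hdet : (Am U).det = 1) (htr : 2 < (Am U).trace) (v : Fin 2 → ℤ) :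
    ψ (γ U v 0) = γ U (leftOf U ψ v) 0 := by
  have h1 : ψ (γ U v 0) ∈ (inl : Multiplicative (Fin 2 → ℤ) →* GammaGrp U).range := by
    apply apply_mem_inl U hdet htr
    exact ⟨ofAdd v, (γ_inl U v).symm⟩
  have h2 : rightHom (ψ (γ U v 0)) = 1 := by
    rw [range_inl_eq_ker_rightHom] at h1
    exact h1
  have h4 : toAdd ((ψ (γ U v 0)).right) = (0:ℤ) := by
    have h5 : (ψ (γ U v 0)).right = 1 := h2
    rw [h5]; rfl
  rw [eq_γ U (ψ (γ U v 0)), γ_inj]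
  exact ⟨rfl, h4⟩

lemma leftOf_add (hdet : (Am U).det = 1) (htr : 2 < (Am U).trace) (v w : Fin 2 → ℤ) :
    leftOf U ψ (v + w) = leftOf U ψ v + leftOf U ψ w := by
  have h2 := map_mul ψ (γ U v 0) (γ U w 0)
  rw [γ_mul_zero, psi_inl U ψ hdet htr, psi_inl U ψ hdet htr, psi_inl U ψ hdet htr,
    γ_mul_zero] at h2
  exact ((γ_inj U).mp h2).1

/-- The matrix of the map induced by `ψ` on `ℤ²`. -/
def Pmat : Matrix (Fin 2) (Fin 2) ℤ :=
  Matrix.of fun i j => leftOf U ψ (Pi.single j 1) i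

lemma leftOf_eq_mulVec (hdet : (Am U).det = 1) (htr : 2 < (Am U).trace) (v : Fin 2 → ℤ) :
    leftOf U ψ v = (Pmat U ψ).mulVec v := by
  set L := AddMonoidHom.mk' (leftOf U ψ) (leftOf_add U ψ hdet htr) with hL
  have hLv : ∀ x, L x = leftOf U ψ x := fun _ => rfl
  conv_lhs => rw [← hLv, single_decomp v, map_add, map_zsmul, map_zsmul, hLv, hLv]
  funext i
  rw [Matrix.mulVec]
  simp only [dotProduct, Fin.sum_univ_two, Pmat, Matrix.of_apply]
  simp [mul_comm]

lemma psi_inl' (hdet : (Am U).det = 1) (htr : 2 < (Am U).trace) (v : Fin 2 → ℤ) :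
    ψ (γ U v 0) = γ U ((Pmat U ψ).mulVec v) 0 := by
  rw [psi_inl U ψ hdet htr, leftOf_eq_mulVec U ψ hdet htr]

/-- ε -/
def eps : ℤ := toAdd (rightHom (ψ (γ U 0 1)))

/-- p -/
def pvec : Fin 2 → ℤ := toAdd ((ψ (γ U 0 1)).left)

lemma psi_t : ψ (γ U 0 1) = γ U (pvec U ψ) (eps U ψ) := eq_γ U _

lemma rightHom_psi (hdet : (Am U).det = 1) (htr : 2 < (Am U).trace) (g : GammaGrp U) :
    rightHom (ψ g) = ofAdd (eps U ψ * toAdd (rightHom g)) := by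
  set v := toAdd g.left with hv
  set m := toAdd g.right with hm
  have hg : γ U v 0 * γ U 0 m = g := by
    rw [γ_mul]
    conv_rhs => rw [eq_γ U g]
    rw [γ_inj]
    constructor
    · rw [Matrix.mulVec_zero]; exact add_zero v
    · ring
  have hpow : γ U 0 m = (γ U 0 1) ^ m := by
    rw [← γ_inr, ← γ_inr, inr_zpow]
  have h0 : rightHom (ψ (γ U v 0)) = 1 := by
    rw [psi_inl U ψ hdet htr]; rfl
  have h1 : rightHom (ψ (γ U 0 1)) = ofAdd (eps U ψ) := rfl
  have h2 : rightHom (γ U v 0) = ofAdd (0:ℤ) := rfl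
  have h3 : rightHom (γ U 0 1) = ofAdd (1:ℤ) := rfl
  rw [← hg, map_mul, map_mul, hpow, map_zpow, map_zpow, h0, h1, one_mul]
  have h6 : toAdd (rightHom (γ U v 0 * (γ U 0 1 : GammaGrp U) ^ m)) = m := by
    rw [map_mul, map_zpow, h2, h3]
    simp
  rw [h6, ← ofAdd_zsmul, smul_eq_mul, mul_comm]

end psi
end Stmt0Aux4

namespace Stmt0Aux5
open SemidirectProduct Multiplicative Stmt0Aux Stmt0Aux2 Stmt0Aux3 Stmt0Aux4

lemma twisted_equiv {G : Type*} [Group G] (f : G →* G) : Equivalence (twistedConj f) where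
  refl x := ⟨1, by simp⟩
  symm := by
    rintro x y ⟨g, rfl⟩
    refine ⟨g⁻¹, ?_⟩
    rw [map_inv]
    group
  trans := by
    rintro x y z ⟨g, rfl⟩ ⟨h, rfl⟩
    refine ⟨h * g, ?_⟩
    rw [map_mul]
    group

lemma sq_eq (X : Matrix (Fin 2) (Fin 2) ℤ) : X * X = X.trace • X - X.det • 1 := by
  have h := Matrix.trace_fin_two X
  have d := Matrix.det_fin_two X
  ext i j
  rw [Matrix.sub_apply, Matrix.smul_apply, Matrix.smul_apply, h, d]
  fin_cases i <;> fin_cases j <;>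
    simp [Matrix.mul_apply, Fin.sum_univ_two, Matrix.one_apply, smul_eq_mul] <;> ring

variable (U : (Matrix (Fin 2) (Fin 2) ℤ)ˣ)
variable (φ : GammaGrp U ≃* GammaGrp U)

lemma Pmat_symm_mul (hdet : (Am U).det = 1) (htr : 2 < (Am U).trace) :
    Pmat U (φ.symm : GammaGrp U ≃* GammaGrp U) * Pmat U φ = 1 := by
  apply mulVec_ext
  intro v
  have h1 := psi_inl' U φ hdet htr v
  have h2 := psi_inl' U (φ.symm : GammaGrp U ≃* GammaGrp U) hdet htr ((Pmat U φ).mulVec v)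
  have h3 : φ.symm (φ (γ U v 0)) = γ U v 0 := MulEquiv.symm_apply_apply φ _
  rw [h1, h2] at h3
  have := ((γ_inj U).mp h3).1
  rw [Matrix.mulVec_mulVec] at this
  rw [this, Matrix.one_mulVec]

lemma Pmat_det_unit (hdet : (Am U).det = 1) (htr : 2 < (Am U).trace) :
    (Pmat U φ).det = 1 ∨ (Pmat U φ).det = -1 := by
  have h := Pmat_symm_mul U φ hdet htr
  have : (Pmat U (φ.symm : GammaGrp U ≃* GammaGrp U)).det * (Pmat U φ).det = 1 := by
    rw [← Matrix.det_mul, h, Matrix.det_one]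
  exact Int.isUnit_iff.mp (IsUnit.of_mul_eq_one _ (by rw [mul_comm] at this; exact this))

lemma eps_mul_symm (hdet : (Am U).det = 1) (htr : 2 < (Am U).trace) :
    eps U φ * eps U (φ.symm : GammaGrp U ≃* GammaGrp U) = 1 := by
  have h := rightHom_psi U φ hdet htr (φ.symm (γ U 0 1))
  rw [MulEquiv.apply_symm_apply] at h
  have h2 : rightHom (γ U 0 1) = ofAdd (1:ℤ) := rfl
  rw [h2] at h
  have := congrArg toAdd h
  simp only [toAdd_ofAdd] at this
  rw [this]
  rfl

lemma eps_pm (hdet : (Am U).det = 1) (htr : 2 < (Am U).trace) :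
    eps U φ = 1 ∨ eps U φ = -1 :=
  Int.isUnit_iff.mp (IsUnit.of_mul_eq_one _ (eps_mul_symm U φ hdet htr))

lemma conj_t (v : Fin 2 → ℤ) :
    γ U 0 1 * γ U v 0 * (γ U 0 1)⁻¹ = γ U ((Am U).mulVec v) 0 := by
  rw [γ_inv, γ_mul, γ_mul, γ_inj]
  constructor
  · simp [Matrix.mulVec_zero, zpow_one]
  · ring

lemma conj_phit (heps : eps U φ = -1) (hdet : (Am U).det = 1) (htr : 2 < (Am U).trace)
    (v : Fin 2 → ℤ) :
    φ (γ U 0 1) * γ U v 0 * (φ (γ U 0 1))⁻¹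
      = γ U (((U⁻¹ : (Matrix (Fin 2) (Fin 2) ℤ)ˣ) : Matrix (Fin 2) (Fin 2) ℤ).mulVec v) 0 := by
  rw [psi_t, heps, γ_inv, γ_mul, γ_mul, γ_inj]
  constructor
  · rw [Matrix.mulVec_neg, Matrix.mulVec_mulVec, ← Units.val_mul, ← zpow_add]
    norm_num
  · ring

lemma A_rel (heps : eps U φ = -1) (hdet : (Am U).det = 1) (htr : 2 < (Am U).trace) :
    (Am U) * Pmat U φ * (Am U) = Pmat U φ := by
  apply mulVec_ext
  intro v
  have h1 := congrArg φ (conj_t U v)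
  rw [map_mul, map_mul, map_inv, psi_inl' U φ hdet htr, psi_inl' U φ hdet htr] at h1
  rw [conj_phit U φ heps hdet htr] at h1
  have h2 := ((γ_inj U).mp h1).1
  -- h2 : (U⁻¹).mulVec (P.mulVec v) = P.mulVec (A.mulVec v)
  have h3 := congrArg (fun w => (Am U).mulVec w) h2
  simp only [Matrix.mulVec_mulVec] at h3 ⊢
  rw [← Matrix.mul_assoc] at h3
  have h4 : (Am U) * ((U⁻¹ : (Matrix (Fin 2) (Fin 2) ℤ)ˣ) : Matrix (Fin 2) (Fin 2) ℤ) = 1 := by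
    rw [← Units.val_mul, mul_inv_cancel, Units.val_one]
  rw [h4, Matrix.one_mul] at h3
  rw [Matrix.mul_assoc]
  exact h3.symm

lemma trace_eq (hdet : (Am U).det = 1) (X : Matrix (Fin 2) (Fin 2) ℤ)
    (hX : (Am U) * X * (Am U) = X) :
    2 * X.trace = (Am U).trace * (X * Am U).trace := by
  have h1 : X.trace = (X * (Am U * Am U)).trace := by
    conv_lhs => rw [← hX]
    rw [Matrix.trace_mul_comm, ← Matrix.mul_assoc]
    exact Matrix.trace_mul_comm _ _
  rw [sq_eq, hdet, one_smul, Matrix.mul_sub, Matrix.mul_smul, Matrix.mul_one,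
    Matrix.trace_sub, Matrix.trace_smul, smul_eq_mul] at h1
  linarith

lemma traceP (heps : eps U φ = -1) (hdet : (Am U).det = 1) (htr : 2 < (Am U).trace) :
    (Pmat U φ).trace = 0 ∧ (Pmat U φ * Am U).trace = 0 := by
  set P := Pmat U φ
  set t := (Am U).trace with ht
  have hrel := A_rel U φ heps hdet htr
  have e1 : 2 * P.trace = t * (P * Am U).trace := trace_eq U hdet P hrel
  have hrel2 : (Am U) * (P * Am U) * (Am U) = P * Am U := by
    rw [← Matrix.mul_assoc, hrel]
  have e2 : 2 * (P * Am U).trace = t * ((P * Am U) * Am U).trace := trace_eq U hdet _ hrel2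
  have e3 : ((P * Am U) * Am U).trace = t * (P * Am U).trace - P.trace := by
    rw [Matrix.mul_assoc, sq_eq, hdet, one_smul, Matrix.mul_sub, Matrix.mul_smul,
      Matrix.mul_one, Matrix.trace_sub, Matrix.trace_smul, smul_eq_mul, ← ht]
  rw [e3] at e2
  have key : (t * t - 4) * (P * Am U).trace = 0 := by linear_combination t * e1 - 2 * e2
  have hq : (P * Am U).trace = 0 := by
    rcases mul_eq_zero.mp key with h | h
    · exfalso; nlinarith
    · exact h
  rw [hq, mul_zero] at e1
  exact ⟨by omega, hq⟩

end Stmt0Aux5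

namespace Stmt0Aux6
open Matrix

/-- Reduction of an integer vector mod 2. -/
def castVec (v : Fin 2 → ℤ) : Fin 2 → ZMod 2 := fun i => (v i : ZMod 2)

/-- Reduction of an integer matrix mod 2. -/
def castMat (M : Matrix (Fin 2) (Fin 2) ℤ) : Matrix (Fin 2) (Fin 2) (ZMod 2) :=
  M.map fun x => (x : ZMod 2)

lemma castMat_mul (M N : Matrix (Fin 2) (Fin 2) ℤ) :
    castMat (M * N) = castMat M * castMat N := by
  ext i j
  simp [castMat, Matrix.map_apply, Matrix.mul_apply, Fin.sum_univ_two]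

lemma castVec_mulVec (M : Matrix (Fin 2) (Fin 2) ℤ) (v : Fin 2 → ℤ) :
    castVec (M.mulVec v) = (castMat M).mulVec (castVec v) := by
  funext i
  simp [castVec, castMat, Matrix.mulVec, dotProduct, Fin.sum_univ_two]

lemma castVec_add (v w : Fin 2 → ℤ) : castVec (v + w) = castVec v + castVec w := by
  funext i; simp [castVec]

lemma castVec_sub (v w : Fin 2 → ℤ) : castVec (v - w) = castVec v - castVec w := by
  funext i; simp [castVec]

/-- selected vector (mod 2) -/
def wselZ (B : Matrix (Fin 2) (Fin 2) (ZMod 2)) : Fin 2 → ZMod 2 :=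
  if B.mulVec ![1,0] ≠ 0 then ![1,0] else ![0,1]

/-- selected vector (integral lift) -/
def wselInt (B : Matrix (Fin 2) (Fin 2) (ZMod 2)) : Fin 2 → ℤ :=
  if B.mulVec ![1,0] ≠ 0 then ![1,0] else ![0,1]

lemma castVec_wselInt (B : Matrix (Fin 2) (Fin 2) (ZMod 2)) :
    castVec (wselInt B) = wselZ B := by
  unfold wselInt wselZ
  split_ifs <;> (funext i; fin_cases i <;> simp [castVec])

set_option synthInstance.maxSize 2000 in
set_option synthInstance.maxHeartbeats 1000000 in
set_option maxHeartbeats 4000000 in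
lemma key2' : ∀ B : Fin 2 → Fin 2 → ZMod 2, (∃ i j, B i j ≠ 0) →
    (∀ y : Fin 2 → ZMod 2, (Matrix.of B).mulVec ((Matrix.of B).mulVec y) = 0) →
    ((Matrix.of B).mulVec (wselZ (Matrix.of B)) ≠ 0 ∧ ∀ y : Fin 2 → ZMod 2,
      (Matrix.of B).mulVec y = 0 ∨
        (Matrix.of B).mulVec y = (Matrix.of B).mulVec (wselZ (Matrix.of B))) := by
  decide

lemma key2 (B : Matrix (Fin 2) (Fin 2) (ZMod 2)) (h0 : B ≠ 0) (hsq : B * B = 0) :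
    (B.mulVec (wselZ B) ≠ 0 ∧ ∀ y : Fin 2 → ZMod 2,
      B.mulVec y = 0 ∨ B.mulVec y = B.mulVec (wselZ B)) := by
  have hex : ∃ i j, B i j ≠ 0 := by
    by_contra hc
    push_neg at hc
    apply h0
    ext i j
    exact hc i j
  have hy : ∀ y : Fin 2 → ZMod 2, B.mulVec (B.mulVec y) = 0 := by
    intro y
    rw [Matrix.mulVec_mulVec, hsq, Matrix.zero_mulVec]
  exact key2' (fun i j => B i j) hex hy

/-- membership in the image of `M` via the mod-2 criterion. -/
lemma mem_range_iff (M N : Matrix (Fin 2) (Fin 2) ℤ)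
    (hMN : M * N = (2:ℤ) • 1) (hNM : N * M = (2:ℤ) • 1) (y : Fin 2 → ℤ) :
    (∃ x, y = M.mulVec x) ↔ (castMat N).mulVec (castVec y) = 0 := by
  constructor
  · rintro ⟨x, rfl⟩
    rw [← castVec_mulVec, Matrix.mulVec_mulVec, hNM, Matrix.smul_mulVec,
      Matrix.one_mulVec]
    funext i
    simp only [castVec, Pi.smul_apply, smul_eq_mul, Int.cast_mul, Pi.zero_apply]
    rw [show ((2:ℤ) : ZMod 2) = 0 from rfl, zero_mul]
  · intro h
    have hdvd : ∀ i, (2:ℤ) ∣ (N.mulVec y) i := by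
      intro i
      have := congrFun h i
      rw [← castVec_mulVec] at this
      exact (ZMod.intCast_zmod_eq_zero_iff_dvd _ 2).mp this
    refine ⟨fun i => (N.mulVec y) i / 2, ?_⟩
    have h2 : N.mulVec y = (2:ℤ) • (fun i => (N.mulVec y) i / 2) := by
      funext i
      have := hdvd i
      simp only [Pi.smul_apply, smul_eq_mul]
      omega
    have h3 : (2:ℤ) • y = (2:ℤ) • (M.mulVec fun i => (N.mulVec y) i / 2) := by
      rw [← Matrix.mulVec_smul, ← h2, Matrix.mulVec_mulVec, hMN,
        Matrix.smul_mulVec, Matrix.one_mulVec]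
    funext i
    have := congrFun h3 i
    simp only [Pi.smul_apply, smul_eq_mul] at this
    omega

end Stmt0Aux6

namespace Stmt0Aux7
open SemidirectProduct Multiplicative Stmt0Aux Stmt0Aux2 Stmt0Aux3 Stmt0Aux4 Stmt0Aux5 Stmt0Aux6

variable (U : (Matrix (Fin 2) (Fin 2) ℤ)ˣ)
variable (φ : GammaGrp U ≃* GammaGrp U)

lemma tw_right (hdet : (Am U).det = 1) (htr : 2 < (Am U).trace) (g x : GammaGrp U) :
    toAdd (rightHom (g * x * (φ.toMonoidHom g)⁻¹))
      = toAdd (rightHom x) + (1 - eps U φ) * toAdd (rightHom g) := by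
  have h1 : φ.toMonoidHom g = φ g := rfl
  simp only [map_mul, map_inv, h1, rightHom_psi U φ hdet htr, toAdd_mul, toAdd_inv,
    toAdd_ofAdd]
  ring

lemma rel_of_quot {a b : GammaGrp U} 
    (h : Quot.mk (twistedConj φ.toMonoidHom) a = Quot.mk (twistedConj φ.toMonoidHom) b) :
    twistedConj φ.toMonoidHom a b :=
  ((twisted_equiv φ.toMonoidHom).eqvGen_iff).mp (Quot.eqvGen_exact h)

lemma tw_act (hdet : (Am U).det = 1) (htr : 2 < (Am U).trace) (x y : Fin 2 → ℤ) (n : ℤ) :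
    γ U x 0 * γ U y n * (φ.toMonoidHom (γ U x 0))⁻¹
      = γ U (x + y - (((U ^ n : (Matrix (Fin 2) (Fin 2) ℤ)ˣ) : Matrix (Fin 2) (Fin 2) ℤ)
          * Pmat U φ).mulVec x) n := by
  have h1 : φ.toMonoidHom (γ U x 0) = γ U ((Pmat U φ).mulVec x) 0 := psi_inl' U φ hdet htr x
  rw [h1, γ_inv, γ_mul, γ_mul, γ_inj]
  constructor
  · simp only [zpow_zero, Units.val_one, Matrix.one_mulVec, neg_zero, zero_add, one_mul,
      Matrix.mulVec_neg, Matrix.mulVec_mulVec, ← Units.val_mul, ← zpow_add, add_zero]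
    abel
  · ring

lemma inf_case1 (hdet : (Am U).det = 1) (htr : 2 < (Am U).trace) (heps : eps U φ = 1) :
    Cardinal.aleph0 ≤ Cardinal.mk (Quot (twistedConj φ.toMonoidHom)) := by
  rw [← Cardinal.mk_int]
  refine Cardinal.mk_le_of_injective (f := fun n : ℤ => Quot.mk _ (γ U 0 n)) ?_
  intro a b h
  obtain ⟨g, hg⟩ := rel_of_quot U φ h
  have h2 := tw_right U φ hdet htr g (γ U 0 a)
  rw [← hg, heps] at h2
  have ha : toAdd (rightHom (γ U 0 a)) = a := rfl
  have hb : toAdd (rightHom (γ U 0 b)) = b := rfl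
  rw [ha, hb] at h2
  omega

end Stmt0Aux7

namespace Stmt0Aux7b
open SemidirectProduct Multiplicative Stmt0Aux Stmt0Aux2 Stmt0Aux3 Stmt0Aux4 Stmt0Aux5 Stmt0Aux6
  Stmt0Aux7 Matrix

variable (U : (Matrix (Fin 2) (Fin 2) ℤ)ˣ)
variable (φ : GammaGrp U ≃* GammaGrp U)

lemma ext_same_level (hdet : (Am U).det = 1) (htr : 2 < (Am U).trace)
    (heps : eps U φ = -1) (a c : Fin 2 → ℤ) (n : ℤ)
    (h : twistedConj φ.toMonoidHom (γ U a n) (γ U c n)) :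
    ∃ x, c - a = (1 - ((U ^ n : (Matrix (Fin 2) (Fin 2) ℤ)ˣ) : Matrix (Fin 2) (Fin 2) ℤ)
      * Pmat U φ).mulVec x := by
  obtain ⟨g, hg⟩ := h
  have hm : toAdd (rightHom g) = 0 := by
    have h2 := tw_right U φ hdet htr g (γ U a n)
    rw [← hg, heps] at h2
    have e1 : toAdd (rightHom (γ U a n)) = n := rfl
    have e2 : toAdd (rightHom (γ U c n)) = n := rfl
    rw [e1, e2] at h2
    omega
  have hm' : toAdd g.right = (0:ℤ) := hm
  have hgγ : g = γ U (toAdd g.left) 0 := by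
    conv_lhs => rw [eq_γ U g]
    rw [γ_inj]
    exact ⟨rfl, hm'⟩
  rw [hgγ, tw_act U φ hdet htr] at hg
  have hc := ((γ_inj U).mp hg).1
  refine ⟨toAdd g.left, ?_⟩
  rw [Matrix.sub_mulVec, Matrix.one_mulVec, hc]
  abel

lemma inf_case2 (hdet : (Am U).det = 1) (htr : 2 < (Am U).trace)
    (heps : eps U φ = -1) (hdP : (Pmat U φ).det = -1) :
    Cardinal.aleph0 ≤ Cardinal.mk (Quot (twistedConj φ.toMonoidHom)) := by
  set P := Pmat U φ with hPdef
  have ht0 := (traceP U φ heps hdet htr).1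
  have hsq : P * P = 1 := by
    rw [sq_eq P, ht0, hdP]
    simp
  have hNM : (1 + P) * (1 - P) = 0 := by
    have h : (1 + P) * (1 - P) = 1 - P * P := by noncomm_ring
    rw [h, hsq, sub_self]
  have hN0ne : (1 + P) ≠ 0 := by
    intro h0
    have hPneg : P = -1 := eq_neg_of_add_eq_zero_right h0
    have hrel := A_rel U φ heps hdet htr
    rw [← hPdef] at hrel
    rw [hPneg] at hrel
    have hAA : (Am U) * (Am U) = 1 := by
      have hh : -((Am U) * (Am U)) = -1 := by
        calc -((Am U) * (Am U)) = (Am U) * (-1) * (Am U) := by noncomm_ring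
        _ = -1 := hrel
      exact neg_inj.mp hh
    have h2 : (Am U).trace * (Am U).trace - 2 = 2 := by
      have e := congrArg Matrix.trace hAA
      rw [sq_eq (Am U), hdet, one_smul, Matrix.trace_sub, Matrix.trace_smul, smul_eq_mul] at e
      simpa [Matrix.trace_one] using e
    nlinarith
  have hexist : ∃ i j, (1 + P) i j ≠ 0 := by
    by_contra hc
    push_neg at hc
    exact hN0ne (by ext i j; simpa using hc i j)
  obtain ⟨i0, j0, hij⟩ := hexist
  set u : Fin 2 → ℤ := fun j => (1 + P) i0 j with hu
  set w : Fin 2 → ℤ := Pi.single j0 1 with hwdef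
  have hfM : ∀ x, u ⬝ᵥ ((1 - P).mulVec x) = 0 := by
    intro x
    rw [Matrix.dotProduct_mulVec]
    have hrow : u ᵥ* (1 - P) = 0 := by
      funext j
      have h3 : ((1 + P) * (1 - P)) i0 j = 0 := by rw [hNM]; rfl
      rw [Matrix.mul_apply] at h3
      simpa [Matrix.vecMul, dotProduct, hu] using h3
    rw [hrow, zero_dotProduct]
  have hfw : u ⬝ᵥ w ≠ 0 := by
    rw [hwdef, dotProduct_single, mul_one]
    exact hij
  rw [← Cardinal.mk_int]
  refine Cardinal.mk_le_of_injective (f := fun k : ℤ => Quot.mk _ (γ U (k • w) 0)) ?_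
  intro a b h
  obtain ⟨x, hx⟩ := ext_same_level U φ hdet htr heps (a • w) (b • w) 0 (rel_of_quot U φ h)
  rw [show ((U ^ (0:ℤ) : (Matrix (Fin 2) (Fin 2) ℤ)ˣ) : Matrix (Fin 2) (Fin 2) ℤ) = 1 by
    rw [zpow_zero, Units.val_one], one_mul] at hx
  have h5 := congrArg (fun v => u ⬝ᵥ v) hx
  simp only [dotProduct_sub, ← hPdef, hfM] at h5
  have h6 : (b - a) * (u ⬝ᵥ w) = 0 := by
    have hb : u ⬝ᵥ (b • w) = b * (u ⬝ᵥ w) := by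
      simp [dotProduct, Fin.sum_univ_two]
      ring
    have ha : u ⬝ᵥ (a • w) = a * (u ⬝ᵥ w) := by
      simp [dotProduct, Fin.sum_univ_two]
      ring
    rw [hb, ha] at h5
    linear_combination h5
  rcases mul_eq_zero.mp h6 with h7 | h7
  · omega
  · exact absurd h7 hfw

end Stmt0Aux7b

namespace Stmt0Aux8
open SemidirectProduct Multiplicative Stmt0Aux Stmt0Aux2 Stmt0Aux3 Stmt0Aux4 Stmt0Aux5 Stmt0Aux6
  Stmt0Aux7 Stmt0Aux7b Matrix

variable (U : (Matrix (Fin 2) (Fin 2) ℤ)ˣ)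
variable (φ : GammaGrp U ≃* GammaGrp U)

lemma castMat_one_add (X : Matrix (Fin 2) (Fin 2) ℤ) : castMat (1 + X) = castMat (1 - X) := by
  ext i j
  have h : (1 + X) i j = (1 - X) i j + 2 * X i j := by
    simp [Matrix.add_apply, Matrix.sub_apply]; ring
  simp only [castMat, Matrix.map_apply, h]
  push_cast
  rw [show (2 : ZMod 2) = 0 from rfl]
  ring

lemma castMat_two_smul : castMat ((2:ℤ) • 1) = 0 := by
  ext i j
  simp only [castMat, Matrix.map_apply, Matrix.smul_apply, smul_eq_mul, Matrix.zero_apply]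
  push_cast
  rw [show (2 : ZMod 2) = 0 from rfl]
  ring

lemma Bsq (X : Matrix (Fin 2) (Fin 2) ℤ) (hX : (1-X)*(1+X) = (2:ℤ) • 1) :
    castMat (1-X) * castMat (1-X) = 0 := by
  conv_lhs => rw [show castMat (1-X) * castMat (1-X) = castMat (1-X) * castMat (1+X) by
    rw [castMat_one_add]]
  rw [← castMat_mul, hX, castMat_two_smul]

lemma Bne (X : Matrix (Fin 2) (Fin 2) ℤ) (hX : (1-X)*(1+X) = (2:ℤ) • 1) :
    castMat (1-X) ≠ 0 := by
  intro h0
  have heven : ∀ i j, (2:ℤ) ∣ (1-X) i j := by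
    intro i j
    have h1 : castMat (1-X) i j = 0 := by rw [h0]; rfl
    exact (ZMod.intCast_zmod_eq_zero_iff_dvd _ 2).mp h1
  have heven2 : ∀ i j, (2:ℤ) ∣ (1+X) i j := by
    intro i j
    have h1 : (1+X) i j = (1-X) i j + 2 * X i j := by
      simp [Matrix.add_apply, Matrix.sub_apply]; ring
    rw [h1]
    exact dvd_add (heven i j) ⟨X i j, rfl⟩
  have hentry : ((1-X) * (1+X)) 0 0 = 2 := by
    rw [hX]
    simp [Matrix.smul_apply, Matrix.one_apply]
  rw [Matrix.mul_apply, Fin.sum_univ_two] at hentry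
  obtain ⟨a, ha⟩ := heven 0 0
  obtain ⟨b, hb⟩ := heven2 0 0
  obtain ⟨c, hc⟩ := heven 0 1
  obtain ⟨d, hd⟩ := heven2 1 0
  rw [ha, hb, hc, hd] at hentry
  have h9 : 4 * (a*b) + 4 * (c*d) = 2 := by linear_combination hentry
  set ab := a * b with hab
  set cd := c * d with hcd
  omega

lemma castVec_zero : castVec (0 : Fin 2 → ℤ) = 0 := by
  funext i; simp [castVec]

set_option maxHeartbeats 1000000 in
lemma four_case (hdet : (Am U).det = 1) (htr : 2 < (Am U).trace)
    (heps : eps U φ = -1) (hdP : (Pmat U φ).det = 1) :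
    Cardinal.mk (Quot (twistedConj φ.toMonoidHom)) = 4 := by
  set P := Pmat U φ with hPdef
  obtain ⟨ht0, ht1⟩ := traceP U φ heps hdet htr
  have hsq : P * P = -1 := by
    rw [sq_eq P, ht0, hdP]
    simp
  have hrel : Am U * P * Am U = P := A_rel U φ heps hdet htr
  set Q : Matrix (Fin 2) (Fin 2) ℤ := Am U * P with hQdef
  have hsqQ : Q * Q = -1 := by
    have h1 : Q * Q = (Am U * P * Am U) * P := by rw [hQdef]; noncomm_ring
    rw [h1, hrel, hsq]
  have hMN0 : (1 - P) * (1 + P) = (2:ℤ) • 1 := by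
    have h : (1 - P) * (1 + P) = 1 - P * P := by noncomm_ring
    rw [h, hsq, sub_neg_eq_add, two_smul]
  have hNM0 : (1 + P) * (1 - P) = (2:ℤ) • 1 := by
    have h : (1 + P) * (1 - P) = 1 - P * P := by noncomm_ring
    rw [h, hsq, sub_neg_eq_add, two_smul]
  have hMN1 : (1 - Q) * (1 + Q) = (2:ℤ) • 1 := by
    have h : (1 - Q) * (1 + Q) = 1 - Q * Q := by noncomm_ring
    rw [h, hsqQ, sub_neg_eq_add, two_smul]
  have hNM1 : (1 + Q) * (1 - Q) = (2:ℤ) • 1 := by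
    have h : (1 + Q) * (1 - Q) = 1 - Q * Q := by noncomm_ring
    rw [h, hsqQ, sub_neg_eq_add, two_smul]
  set B0 := castMat (1 - P) with hB0
  set B1 := castMat (1 - Q) with hB1
  have hB0sq : B0 * B0 = 0 := Bsq P hMN0
  have hB1sq : B1 * B1 = 0 := Bsq Q hMN1
  have hB0ne : B0 ≠ 0 := Bne P hMN0
  have hB1ne : B1 ≠ 0 := Bne Q hMN1
  obtain ⟨hk0ne, hk0⟩ := key2 B0 hB0ne hB0sq
  obtain ⟨hk1ne, hk1⟩ := key2 B1 hB1ne hB1sq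
  set w0 : Fin 2 → ℤ := wselInt B0 with hw0
  set w1 : Fin 2 → ℤ := wselInt B1 with hw1
  have hcw0 : castVec w0 = wselZ B0 := castVec_wselInt B0
  have hcw1 : castVec w1 = wselZ B1 := castVec_wselInt B1
  have hmem0 : ∀ y : Fin 2 → ℤ, B0.mulVec (castVec y) = 0 → ∃ x, y = (1 - P).mulVec x := by
    intro y hy
    refine (mem_range_iff (1-P) (1+P) hMN0 hNM0 y).mpr ?_
    rw [castMat_one_add]
    exact hy
  have hmem1 : ∀ y : Fin 2 → ℤ, B1.mulVec (castVec y) = 0 → ∃ x, y = (1 - Q).mulVec x := by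
    intro y hy
    refine (mem_range_iff (1-Q) (1+Q) hMN1 hNM1 y).mpr ?_
    rw [castMat_one_add]
    exact hy
  -- matrix identities at levels 0 and 1
  have hmat0 : (1 : Matrix (Fin 2) (Fin 2) ℤ)
      - ((U ^ (0:ℤ) : (Matrix (Fin 2) (Fin 2) ℤ)ˣ) : Matrix (Fin 2) (Fin 2) ℤ) * P = 1 - P := by
    rw [zpow_zero, Units.val_one, one_mul]
  have hmat1 : (1 : Matrix (Fin 2) (Fin 2) ℤ)
      - ((U ^ (1:ℤ) : (Matrix (Fin 2) (Fin 2) ℤ)ˣ) : Matrix (Fin 2) (Fin 2) ℤ) * P = 1 - Q := by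
    rw [zpow_one, hQdef]
  -- parity
  have hpar : ∀ (a c : Fin 2 → ℤ) (b d : ℤ),
      twistedConj φ.toMonoidHom (γ U a b) (γ U c d) → (d - b) % 2 = 0 := by
    rintro a c b d ⟨g, hg⟩
    have h2 := tw_right U φ hdet htr g (γ U a b)
    rw [← hg, heps] at h2
    have e1 : toAdd (rightHom (γ U a b)) = b := rfl
    have e2 : toAdd (rightHom (γ U c d)) = d := rfl
    rw [e1, e2] at h2
    omega
  -- invariance at a fixed level
  have hinv : ∀ (n : ℤ) (a c : Fin 2 → ℤ),
      twistedConj φ.toMonoidHom (γ U a n) (γ U c n) →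
      ∀ B : Matrix (Fin 2) (Fin 2) (ZMod 2),
        B = castMat (1 - ((U ^ n : (Matrix (Fin 2) (Fin 2) ℤ)ˣ) : Matrix (Fin 2) (Fin 2) ℤ) * P) →
        B * B = 0 →
        B.mulVec (castVec c) = B.mulVec (castVec a) := by
    intro n a c hr B hB hBsq'
    obtain ⟨x, hx⟩ := ext_same_level U φ hdet htr heps a c n hr
    have h7 := congrArg castVec hx
    rw [castVec_sub, castVec_mulVec, ← hB] at h7
    have h8 := congrArg (fun v => B.mulVec v) h7
    simp only [Matrix.mulVec_sub, Matrix.mulVec_mulVec] at h8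
    rw [hBsq', Matrix.zero_mulVec] at h8
    exact sub_eq_zero.mp h8
  -- distinctness within levels
  have hne01 : ¬ twistedConj φ.toMonoidHom (γ U 0 0) (γ U w0 0) := by
    intro hr
    have h5 := hinv 0 0 w0 hr B0 (by rw [hB0, hmat0]) hB0sq
    rw [hcw0, castVec_zero, Matrix.mulVec_zero] at h5
    exact hk0ne h5
  have hne23 : ¬ twistedConj φ.toMonoidHom (γ U 0 1) (γ U w1 1) := by
    intro hr
    have h5 := hinv 1 0 w1 hr B1 (by rw [hB1, hmat1]) hB1sq
    rw [hcw1, castVec_zero, Matrix.mulVec_zero] at h5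
    exact hk1ne h5
  -- the four representatives
  set reps : Fin 4 → GammaGrp U := ![γ U 0 0, γ U w0 0, γ U 0 1, γ U w1 1] with hreps
  have hreps0 : reps 0 = γ U 0 0 := rfl
  have hreps1 : reps 1 = γ U w0 0 := rfl
  have hreps2 : reps 2 = γ U 0 1 := rfl
  have hreps3 : reps 3 = γ U w1 1 := rfl
  set F : Fin 4 → Quot (twistedConj φ.toMonoidHom) :=
    fun i => Quot.mk (twistedConj φ.toMonoidHom) (reps i) with hF
  -- surjectivity
  have hsur : ∀ g : GammaGrp U, ∃ i : Fin 4,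
      F i = Quot.mk (twistedConj φ.toMonoidHom) g := by
    intro g
    set n := toAdd (rightHom g) with hn
    set m := -(n / 2) with hm
    set g1 := γ U 0 m * g * (φ.toMonoidHom (γ U 0 m))⁻¹ with hg1
    have hq1 : Quot.mk (twistedConj φ.toMonoidHom) g
        = Quot.mk (twistedConj φ.toMonoidHom) g1 := Quot.sound ⟨γ U 0 m, rfl⟩
    have hlev1 : toAdd (rightHom g1) = n + 2 * m := by
      have h2 := tw_right U φ hdet htr (γ U 0 m) g
      rw [heps] at h2
      have e : toAdd (rightHom (γ U 0 m)) = m := rfl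
      rw [e] at h2
      rw [hg1, h2]
      ring
    set s := n + 2 * m with hs
    have hs01 : s = 0 ∨ s = 1 := by omega
    set z := toAdd g1.left with hz
    have hg1γ : g1 = γ U z s := by
      conv_lhs => rw [eq_γ U g1]
      rw [γ_inj]
      exact ⟨rfl, hlev1⟩
    rcases hs01 with h01 | h01
    · rw [h01] at hg1γ
      rcases hk0 (castVec z) with hcase | hcase
      · obtain ⟨x, hxx⟩ := hmem0 z hcase
        refine ⟨0, ?_⟩
        show Quot.mk (twistedConj φ.toMonoidHom) (reps 0)
            = Quot.mk (twistedConj φ.toMonoidHom) g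
        rw [hreps0, hq1, hg1γ]
        apply Quot.sound
        refine ⟨γ U x 0, ?_⟩
        rw [tw_act U φ hdet htr, γ_inj]
        refine ⟨?_, rfl⟩
        rw [hxx]
        rw [show ((U ^ (0:ℤ) : (Matrix (Fin 2) (Fin 2) ℤ)ˣ) : Matrix (Fin 2) (Fin 2) ℤ) * P
            = P from by rw [zpow_zero, Units.val_one, one_mul]]
        rw [Matrix.sub_mulVec, Matrix.one_mulVec]
        abel
      · have hsub : B0.mulVec (castVec (z - w0)) = 0 := by
          rw [castVec_sub, Matrix.mulVec_sub, hcase, hcw0, sub_self]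
        obtain ⟨x, hxx⟩ := hmem0 (z - w0) hsub
        refine ⟨1, ?_⟩
        show Quot.mk (twistedConj φ.toMonoidHom) (reps 1)
            = Quot.mk (twistedConj φ.toMonoidHom) g
        rw [hreps1, hq1, hg1γ]
        apply Quot.sound
        refine ⟨γ U x 0, ?_⟩
        rw [tw_act U φ hdet htr, γ_inj]
        refine ⟨?_, rfl⟩
        rw [show ((U ^ (0:ℤ) : (Matrix (Fin 2) (Fin 2) ℤ)ˣ) : Matrix (Fin 2) (Fin 2) ℤ) * P
            = P from by rw [zpow_zero, Units.val_one, one_mul]]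
        have h9 : z = w0 + (1 - P).mulVec x := by
          rw [← hxx]; abel
        rw [h9, Matrix.sub_mulVec, Matrix.one_mulVec]
        abel
    · rw [h01] at hg1γ
      rcases hk1 (castVec z) with hcase | hcase
      · obtain ⟨x, hxx⟩ := hmem1 z hcase
        refine ⟨2, ?_⟩
        show Quot.mk (twistedConj φ.toMonoidHom) (reps 2)
            = Quot.mk (twistedConj φ.toMonoidHom) g
        rw [hreps2, hq1, hg1γ]
        apply Quot.sound
        refine ⟨γ U x 0, ?_⟩
        rw [tw_act U φ hdet htr, γ_inj]
        refine ⟨?_, rfl⟩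
        rw [hxx]
        rw [show ((U ^ (1:ℤ) : (Matrix (Fin 2) (Fin 2) ℤ)ˣ) : Matrix (Fin 2) (Fin 2) ℤ) * P
            = Q from by rw [zpow_one, hQdef]]
        rw [Matrix.sub_mulVec, Matrix.one_mulVec]
        abel
      · have hsub : B1.mulVec (castVec (z - w1)) = 0 := by
          rw [castVec_sub, Matrix.mulVec_sub, hcase, hcw1, sub_self]
        obtain ⟨x, hxx⟩ := hmem1 (z - w1) hsub
        refine ⟨3, ?_⟩
        show Quot.mk (twistedConj φ.toMonoidHom) (reps 3)
            = Quot.mk (twistedConj φ.toMonoidHom) g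
        rw [hreps3, hq1, hg1γ]
        apply Quot.sound
        refine ⟨γ U x 0, ?_⟩
        rw [tw_act U φ hdet htr, γ_inj]
        refine ⟨?_, rfl⟩
        rw [show ((U ^ (1:ℤ) : (Matrix (Fin 2) (Fin 2) ℤ)ˣ) : Matrix (Fin 2) (Fin 2) ℤ) * P
            = Q from by rw [zpow_one, hQdef]]
        have h9 : z = w1 + (1 - Q).mulVec x := by
          rw [← hxx]; abel
        rw [h9, Matrix.sub_mulVec, Matrix.one_mulVec]
        abel
  -- injectivity
  have hsymm : ∀ {x y : GammaGrp U}, twistedConj φ.toMonoidHom x y →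
      twistedConj φ.toMonoidHom y x := fun h => (twisted_equiv φ.toMonoidHom).symm h
  have hinj : Function.Injective F := by
    intro i j hij
    have hr : twistedConj φ.toMonoidHom (reps i) (reps j) := rel_of_quot U φ hij
    fin_cases i <;> fin_cases j <;> simp only [hreps0, hreps1, hreps2, hreps3] at hr ⊢ <;>
      first
        | rfl
        | (exact absurd hr hne01)
        | (exact absurd (hsymm hr) hne01)
        | (exact absurd hr hne23)
        | (exact absurd (hsymm hr) hne23)
        | (exfalso; have := hpar _ _ _ _ hr; omega)
  have hbij : Function.Bijective F := by
    refine ⟨hinj, ?_⟩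
    intro q
    obtain ⟨g, rfl⟩ := Quot.exists_rep q
    exact hsur g
  calc Cardinal.mk (Quot (twistedConj φ.toMonoidHom))
      = Cardinal.mk (Fin 4) := (Cardinal.mk_congr (Equiv.ofBijective F hbij)).symm
    _ = 4 := by simp

end Stmt0Aux8

/-- for `A ∈ SL(2,ℤ)` with `tr A > 2`, every automorphism `φ` of
`Γ_A = ℤ² ⋊_A ℤ` maps `ℤ² × {0}` onto itself, `φ(t) = (p, ε)` with `ε = ±1`; moreover
`R(φ) = 4` when `ε = -1` and the induced automorphism of `ℤ²` has determinant `1`,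
and `R(φ)` is infinite otherwise. -/
theorem stmt0 (U : (Matrix (Fin 2) (Fin 2) ℤ)ˣ)
    (hdet : (U : Matrix (Fin 2) (Fin 2) ℤ).det = 1)
    (htr : 2 < (U : Matrix (Fin 2) (Fin 2) ℤ).trace)
    (φ : GammaGrp U ≃* GammaGrp U) :
    Subgroup.map φ.toMonoidHom (SemidirectProduct.inl :
        Multiplicative (Fin 2 → ℤ) →* GammaGrp U).range
      = (SemidirectProduct.inl : Multiplicative (Fin 2 → ℤ) →* GammaGrp U).range ∧
    ∃ (P : Matrix (Fin 2) (Fin 2) ℤ) (p : Fin 2 → ℤ) (ε : ℤ),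
      (ε = 1 ∨ ε = -1) ∧
      (∀ v : Fin 2 → ℤ,
        φ (SemidirectProduct.inl (Multiplicative.ofAdd v))
          = SemidirectProduct.inl (Multiplicative.ofAdd (P.mulVec v))) ∧
      φ (SemidirectProduct.inr (Multiplicative.ofAdd (1 : ℤ)))
        = SemidirectProduct.inl (Multiplicative.ofAdd p)
            * SemidirectProduct.inr (Multiplicative.ofAdd ε) ∧
      ((ε = -1 ∧ P.det = 1) → reidemeisterNumber φ.toMonoidHom = 4) ∧
      (¬(ε = -1 ∧ P.det = 1) → Cardinal.aleph0 ≤ reidemeisterNumber φ.toMonoidHom) := by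
  constructor
  · exact Stmt0Aux3.map_inl U hdet htr φ
  · refine ⟨Stmt0Aux4.Pmat U φ, Stmt0Aux4.pvec U φ, Stmt0Aux4.eps U φ,
      Stmt0Aux5.eps_pm U φ hdet htr, ?_, ?_, ?_, ?_⟩
    · intro v
      rw [Stmt0Aux2.γ_inl U v, Stmt0Aux2.γ_inl U ((Stmt0Aux4.Pmat U φ).mulVec v)]
      exact Stmt0Aux4.psi_inl' U φ hdet htr v
    · rw [Stmt0Aux2.γ_inr U 1, Stmt0Aux4.psi_t U φ]
      exact SemidirectProduct.mk_eq_inl_mul_inr _ _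
    · rintro ⟨h1, h2⟩
      exact Stmt0Aux8.four_case U φ hdet htr h1 h2
    · intro hno
      rcases Stmt0Aux5.eps_pm U φ hdet htr with he | he
      · exact Stmt0Aux7.inf_case1 U φ hdet htr he
      · have hd : (Stmt0Aux4.Pmat U φ).det = -1 := by
          rcases Stmt0Aux5.Pmat_det_unit U φ hdet htr with h | h
          · exact absurd ⟨he, h⟩ hno
          · exact h
        exact Stmt0Aux7b.inf_case2 U φ hdet htr he hd
end

section
/- Let N ∈ GL(2,ℤ) with det N = −1 and tr N ≠ 0. Then the group Π₂⁻ = ℤ² ⋊_N ℤ has the R_∞ property: for every automorphism φ of Π₂⁻, the number of φ-twisted conjugacy classes is infinite. -/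
namespace Stmt2Aux
open SemidirectProduct Multiplicative Matrix

variable (U : (Matrix (Fin 2) (Fin 2) ℤ)ˣ)

abbrev bAct : Multiplicative ℤ →* MulAut (Multiplicative (Fin 2 → ℤ)) :=
  zpowersHom (MulAut (Multiplicative (Fin 2 → ℤ)))
    (AddEquiv.toMultiplicative (mulVecAut U))

lemma act_one (v : Fin 2 → ℤ) :
    bAct U (ofAdd 1) (ofAdd v) = ofAdd ((U : Matrix (Fin 2) (Fin 2) ℤ).mulVec v) := rfl

lemma act_neg_one (v : Fin 2 → ℤ) :
    bAct U (ofAdd (-1)) (ofAdd v)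
      = ofAdd (((U⁻¹ : (Matrix (Fin 2) (Fin 2) ℤ)ˣ) : Matrix (Fin 2) (Fin 2) ℤ).mulVec v) := rfl

lemma det_sub_one (hdet : (U : Matrix (Fin 2) (Fin 2) ℤ).det = -1) :
    ((U : Matrix (Fin 2) (Fin 2) ℤ) - 1).det = -(U : Matrix (Fin 2) (Fin 2) ℤ).trace := by
  rw [Matrix.det_fin_two] at hdet ⊢
  rw [Matrix.trace_fin_two]
  simp only [Matrix.sub_apply, Matrix.one_apply_eq, Matrix.one_apply_ne (by decide : (0:Fin 2) ≠ 1),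
    Matrix.one_apply_ne (by decide : (1:Fin 2) ≠ 0)]
  linarith [hdet]

/-- Any hom to `Multiplicative ℤ` kills `inl`. -/
lemma hom_kills_inl (hdet : (U : Matrix (Fin 2) (Fin 2) ℤ).det = -1)
    (htr : (U : Matrix (Fin 2) (Fin 2) ℤ).trace ≠ 0)
    (f : GammaGrp U →* Multiplicative ℤ) (x : Fin 2 → ℤ) :
    f (inl (ofAdd x)) = 1 := by
  set A := (U : Matrix (Fin 2) (Fin 2) ℤ) with hA
  have Ladd : ∀ a b : Fin 2 → ℤ,
      toAdd (f (inl (ofAdd (a + b)))) = toAdd (f (inl (ofAdd a))) + toAdd (f (inl (ofAdd b))) := by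
    intro a b
    rw [ofAdd_add, _root_.map_mul, _root_.map_mul, toAdd_mul]
  set L : (Fin 2 → ℤ) →+ ℤ := AddMonoidHom.mk' (fun y => toAdd (f (inl (ofAdd y)))) Ladd with hL
  have key : ∀ y, L (A.mulVec y) = L y := by
    intro y
    have h1 : (inl (ofAdd (A.mulVec y)) : GammaGrp U)
        = inr (ofAdd (1:ℤ)) * inl (ofAdd y) * inr (ofAdd (1:ℤ))⁻¹ :=
      inl_aut (ofAdd (1:ℤ)) (ofAdd y)
    have h2 : f (inl (ofAdd (A.mulVec y))) = f (inl (ofAdd y)) := by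
      rw [h1]
      simp [_root_.map_mul, map_inv, mul_comm, mul_left_comm]
    simp only [hL, AddMonoidHom.mk'_apply, h2]
  have key2 : ∀ y, L ((A - 1).mulVec y) = 0 := by
    intro y
    rw [Matrix.sub_mulVec, Matrix.one_mulVec]
    have := key y
    have hsub := L.map_sub (A.mulVec y) y
    rw [hsub, this, sub_self]
  have hd : (A - 1).det ≠ 0 := by
    rw [det_sub_one U hdet]; simpa using htr
  have hzero : L x = 0 := by
    have h3 : (A - 1).det • x = (A - 1).mulVec ((A - 1).adjugate.mulVec x) := by
      rw [Matrix.mulVec_mulVec, Matrix.mul_adjugate, Matrix.smul_mulVec, Matrix.one_mulVec]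
    have h4 : L ((A - 1).det • x) = 0 := by rw [h3]; exact key2 _
    rw [map_zsmul, smul_eq_mul] at h4
    exact (mul_eq_zero.mp h4).resolve_left hd
  have : toAdd (f (inl (ofAdd x))) = 0 := hzero
  rwa [← toAdd_one, toAdd.injective.eq_iff] at this

/-- The integer by which `φ` acts on the quotient `ℤ`. -/
def Eps (φ : GammaGrp U ≃* GammaGrp U) : ℤ :=
  toAdd (rightHom (φ (inr (ofAdd (1:ℤ)))))

lemma right_phi (hdet : (U : Matrix (Fin 2) (Fin 2) ℤ).det = -1)
    (htr : (U : Matrix (Fin 2) (Fin 2) ℤ).trace ≠ 0)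
    (φ : GammaGrp U ≃* GammaGrp U) (g : GammaGrp U) :
    toAdd (rightHom (φ g)) = Eps U φ * toAdd (rightHom g) := by
  conv_lhs => rw [← inl_left_mul_inr_right g]
  rw [_root_.map_mul, _root_.map_mul, toAdd_mul]
  have h1 : rightHom (φ (inl g.left)) = 1 := by
    have := hom_kills_inl U hdet htr (rightHom.comp φ.toMonoidHom) (toAdd g.left)
    simpa using this
  rw [h1]
  have h2 : (inr g.right : GammaGrp U) = (inr (ofAdd (1:ℤ))) ^ (toAdd g.right) := by
    rw [← map_zpow]
    congr 1
    rw [← ofAdd_zsmul]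
    simp
  rw [h2, map_zpow, map_zpow, toAdd_zpow]
  simp [Eps, mul_comm]

lemma conj_inl (h : GammaGrp U) (v : Multiplicative (Fin 2 → ℤ)) :
    h * inl v * h⁻¹ = inl (bAct U (rightHom h) v) := by
  have hr : rightHom h = h.right := rfl
  rw [hr]
  ext <;> simp [mul_comm, mul_left_comm]

lemma eq_of_mulVec {M N : Matrix (Fin 2) (Fin 2) ℤ}
    (h : ∀ x, M.mulVec x = N.mulVec x) : M = N := by
  ext i j
  have := congrFun (h (Pi.single j 1)) i
  simpa [Matrix.mulVec_single] using this

lemma right_eq_one_imp (g : GammaGrp U) (hg : rightHom g = 1) : g = inl g.left := by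
  conv_lhs => rw [← inl_left_mul_inr_right g]
  rw [show g.right = 1 from hg, _root_.map_one, mul_one]

lemma eps_ne_neg_one (hdet : (U : Matrix (Fin 2) (Fin 2) ℤ).det = -1)
    (htr : (U : Matrix (Fin 2) (Fin 2) ℤ).trace ≠ 0)
    (φ : GammaGrp U ≃* GammaGrp U) : Eps U φ ≠ -1 := by
  intro hE
  set A := (U : Matrix (Fin 2) (Fin 2) ℤ) with hAdef
  set B := ((U⁻¹ : (Matrix (Fin 2) (Fin 2) ℤ)ˣ) : Matrix (Fin 2) (Fin 2) ℤ) with hBdef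
  have hker : ∀ (ψ : GammaGrp U ≃* GammaGrp U) (x : Fin 2 → ℤ),
      ψ (inl (ofAdd x)) = inl (ofAdd (toAdd ((ψ (inl (ofAdd x))).left))) := by
    intro ψ x
    have h1 : rightHom (ψ (inl (ofAdd x))) = 1 :=
      hom_kills_inl U hdet htr (rightHom.comp ψ.toMonoidHom) x
    have h2 := right_eq_one_imp U _ h1
    simpa using h2
  set P : (Fin 2 → ℤ) → (Fin 2 → ℤ) := fun x => toAdd ((φ (inl (ofAdd x))).left) with hPdef
  set P' : (Fin 2 → ℤ) → (Fin 2 → ℤ) := fun x => toAdd ((φ.symm (inl (ofAdd x))).left) with hP'def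
  have hP : ∀ x, φ (inl (ofAdd x)) = inl (ofAdd (P x)) := fun x => hker φ x
  have hP' : ∀ x, φ.symm (inl (ofAdd x)) = inl (ofAdd (P' x)) := fun x => hker φ.symm x
  have hPP' : ∀ x, P (P' x) = x := by
    intro x
    have h0 : φ (φ.symm (inl (ofAdd x))) = inl (ofAdd x) := φ.apply_symm_apply _
    rw [hP', hP] at h0
    exact ofAdd.injective (inl_injective h0)
  have hP'P : ∀ x, P' (P x) = x := by
    intro x
    have h0 : φ.symm (φ (inl (ofAdd x))) = inl (ofAdd x) := φ.symm_apply_apply _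
    rw [hP, hP'] at h0
    exact ofAdd.injective (inl_injective h0)
  have hadd : ∀ (ψ : GammaGrp U ≃* GammaGrp U)
      (Q : (Fin 2 → ℤ) → (Fin 2 → ℤ))
      (hQ : ∀ x, ψ (inl (ofAdd x)) = inl (ofAdd (Q x))) (x y : Fin 2 → ℤ),
      Q (x + y) = Q x + Q y := by
    intro ψ Q hQ x y
    have h0 : ψ (inl (ofAdd (x + y))) = ψ (inl (ofAdd x)) * ψ (inl (ofAdd y)) := by
      rw [← _root_.map_mul, ← _root_.map_mul, ← ofAdd_add]
    rw [hQ, hQ, hQ, ← _root_.map_mul, ← ofAdd_add] at h0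
    exact ofAdd.injective (inl_injective h0)
  have hrel : ∀ x, P (A.mulVec x) = B.mulVec (P x) := by
    intro x
    have h1 : (inl (ofAdd (A.mulVec x)) : GammaGrp U)
        = inr (ofAdd (1:ℤ)) * inl (ofAdd x) * (inr (ofAdd (1:ℤ)))⁻¹ := by
      rw [← map_inv]
      exact inl_aut (ofAdd (1:ℤ)) (ofAdd x)
    have h2 := congrArg φ h1
    rw [_root_.map_mul, _root_.map_mul, map_inv, hP (A.mulVec x), hP x,
      conj_inl U (φ (inr (ofAdd (1:ℤ)))) (ofAdd (P x))] at h2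
    have h3 : rightHom (φ (inr (ofAdd (1:ℤ)))) = ofAdd (-1 : ℤ) := by
      have h4 : toAdd (rightHom (φ (inr (ofAdd (1:ℤ))))) = -1 := hE
      rw [← h4]
      simp
    rw [h3, act_neg_one] at h2
    exact ofAdd.injective (inl_injective h2)
  -- pass to matrices
  set Pl : (Fin 2 → ℤ) →ₗ[ℤ] (Fin 2 → ℤ) :=
    (AddMonoidHom.mk' P (fun x y => hadd φ P hP x y)).toIntLinearMap with hPl
  set P'l : (Fin 2 → ℤ) →ₗ[ℤ] (Fin 2 → ℤ) :=
    (AddMonoidHom.mk' P' (fun x y => hadd φ.symm P' hP' x y)).toIntLinearMap with hP'l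
  set M : Matrix (Fin 2) (Fin 2) ℤ := LinearMap.toMatrix' Pl with hMdef
  set M' : Matrix (Fin 2) (Fin 2) ℤ := LinearMap.toMatrix' P'l with hM'def
  have hM : ∀ x, M.mulVec x = P x := by
    intro x
    rw [← Matrix.toLin'_apply, hMdef, Matrix.toLin'_toMatrix']
    rfl
  have hM' : ∀ x, M'.mulVec x = P' x := by
    intro x
    rw [← Matrix.toLin'_apply, hM'def, Matrix.toLin'_toMatrix']
    rfl
  have hMA : M * A = B * M := by
    apply eq_of_mulVec
    intro x
    rw [← Matrix.mulVec_mulVec, ← Matrix.mulVec_mulVec, hM, hM, hrel]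
  have hMM' : M * M' = 1 := by
    apply eq_of_mulVec
    intro x
    rw [← Matrix.mulVec_mulVec, hM, hM', hPP', Matrix.one_mulVec]
  have hM'M : M' * M = 1 := by
    apply eq_of_mulVec
    intro x
    rw [← Matrix.mulVec_mulVec, hM', hM, hP'P, Matrix.one_mulVec]
  have hBeq : B = M * A * M' := by
    rw [hMA, mul_assoc, hMM', mul_one]
  have t1 : B.trace = A.trace := by
    rw [hBeq, Matrix.trace_mul_comm (M * A) M', ← mul_assoc, hM'M, one_mul]
  have t2 : B.trace = -A.trace := by
    have hAB : A * B = 1 := by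
      rw [hAdef, hBdef, ← Units.val_mul, mul_inv_cancel, Units.val_one]
    have hadjA : (-(A.adjugate)) * A = 1 := by
      rw [neg_mul, Matrix.adjugate_mul, hdet]
      simp
    have hB : B = -(A.adjugate) := by
      calc B = 1 * B := (one_mul B).symm
        _ = (-(A.adjugate) * A) * B := by rw [hadjA]
        _ = -(A.adjugate) * (A * B) := by rw [mul_assoc]
        _ = -(A.adjugate) := by rw [hAB, mul_one]
    rw [hB, Matrix.trace_neg, Matrix.adjugate_fin_two, Matrix.trace_fin_two_of,
      Matrix.trace_fin_two]
    ring
  have : A.trace = 0 := by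
    rw [t1] at t2
    linarith
  exact htr this

end Stmt2Aux

open SemidirectProduct Multiplicative Stmt2Aux

/-- for `N ∈ GL(2,ℤ)` with `det N = -1` and `tr N ≠ 0`, the group
`Π₂⁻ = ℤ² ⋊_N ℤ` has the `R∞` property. -/
theorem stmt2 (U : (Matrix (Fin 2) (Fin 2) ℤ)ˣ)
    (hdet : (U : Matrix (Fin 2) (Fin 2) ℤ).det = -1)
    (htr : (U : Matrix (Fin 2) (Fin 2) ℤ).trace ≠ 0)
    (φ : GammaGrp U ≃* GammaGrp U) :
    Cardinal.aleph0 ≤ reidemeisterNumber φ.toMonoidHom := by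
  have h1 : Eps U φ.symm * Eps U φ = 1 := by
    have h2 := right_phi U hdet htr φ.symm (φ (inr (ofAdd (1:ℤ))))
    rw [φ.symm_apply_apply, rightHom_inr, toAdd_ofAdd] at h2
    exact h2.symm
  have hE1 : Eps U φ = 1 := by
    have hunit : IsUnit (Eps U φ) := IsUnit.of_mul_eq_one _ (by rw [mul_comm]; exact h1)
    rcases Int.isUnit_iff.mp hunit with h | h
    · exact h
    · exact absurd h (eps_ne_neg_one U hdet htr φ)
  have hcompat : ∀ a b : GammaGrp U, twistedConj φ.toMonoidHom a b →
      toAdd (rightHom a) = toAdd (rightHom b) := by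
    rintro a b ⟨g, hg⟩
    have key : toAdd (rightHom (φ.toMonoidHom g)) = toAdd (rightHom g) := by
      have h5 := right_phi U hdet htr φ g
      rw [hE1, one_mul] at h5
      exact h5
    rw [hg]
    simp only [_root_.map_mul, map_inv, toAdd_mul, toAdd_inv, key]
    ring
  let F : Quot (twistedConj φ.toMonoidHom) → ℤ :=
    Quot.lift (fun g => toAdd (rightHom g)) hcompat
  have hsurj : Function.Surjective F := by
    intro m
    exact ⟨Quot.mk _ (inr (ofAdd m)), by simp [F]⟩
  calc Cardinal.aleph0 = Cardinal.mk ℤ := Cardinal.mk_int.symm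
    _ ≤ reidemeisterNumber φ.toMonoidHom := Cardinal.mk_le_of_surjective hsurj
end

section
/- Let A = (ℓ_{ij}) ∈ SL(2,ℤ) with tr A > 2, let k ∈ ℤ², and let φ be an automorphism of Π₁(k). Then there exist n₁, n₂, p, x ∈ ℤ² and ε ∈ {1, −1} such that φ(a₁) = a^{n₁}, φ(a₂) = a^{n₂}, φ(t) = a^p t^ε and φ(β) = a^x β, and these data satisfy: [φ] := (n₁ | n₂) ∈ GL(2,ℤ); A^ε [φ] = [φ] A; 2p = (I − A)x + (I − [φ])k when ε = 1, and 2p = (I − A⁻¹)x − (A⁻¹ + [φ])k when ε = −1. In particular, the subgroup of Π₁(k) generated by a₁, a₂, t is a characteristic subgroup. -/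
/-- Generators of the crystallographic group `Π₁(k)`. -/
inductive Gen1 | a1 | a2 | t | b

open FreeGroup in
/-- The relators of the presentation of `Π₁(k)`:
`[a₁,a₂] = 1`, `t aᵢ t⁻¹ = A(aᵢ)`, `β aᵢ β⁻¹ = aᵢ⁻¹`, `β² = 1`, `β t β⁻¹ = aᵏ t`. -/
def relsPi1 (A : Matrix (Fin 2) (Fin 2) ℤ) (k : Fin 2 → ℤ) : Set (FreeGroup Gen1) :=
  { of Gen1.a1 * of Gen1.a2 * (of Gen1.a2 * of Gen1.a1)⁻¹,
    of Gen1.t * of Gen1.a1 * (of Gen1.t)⁻¹ * (of Gen1.a1 ^ A 0 0 * of Gen1.a2 ^ A 1 0)⁻¹,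
    of Gen1.t * of Gen1.a2 * (of Gen1.t)⁻¹ * (of Gen1.a1 ^ A 0 1 * of Gen1.a2 ^ A 1 1)⁻¹,
    of Gen1.b * of Gen1.a1 * (of Gen1.b)⁻¹ * of Gen1.a1,
    of Gen1.b * of Gen1.a2 * (of Gen1.b)⁻¹ * of Gen1.a2,
    of Gen1.b * of Gen1.b,
    of Gen1.b * of Gen1.t * (of Gen1.b)⁻¹ * (of Gen1.a1 ^ k 0 * of Gen1.a2 ^ k 1 * of Gen1.t)⁻¹ }

/-- The crystallographic group `Π₁(k)` of `Sol`. -/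
abbrev Pi1 (A : Matrix (Fin 2) (Fin 2) ℤ) (k : Fin 2 → ℤ) := PresentedGroup (relsPi1 A k)

/-- `a^n = a₁^{n 0} * a₂^{n 1}` in `Π₁(k)`. -/
def aP (A : Matrix (Fin 2) (Fin 2) ℤ) (k : Fin 2 → ℤ) (n : Fin 2 → ℤ) : Pi1 A k :=
  (PresentedGroup.of Gen1.a1) ^ n 0 * (PresentedGroup.of Gen1.a2) ^ n 1

/-- The `2 × 2` integer matrix with columns `n₁` and `n₂`. -/
def colMat (n₁ n₂ : Fin 2 → ℤ) : Matrix (Fin 2) (Fin 2) ℤ :=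
  Matrix.of ![![n₁ 0, n₂ 0], ![n₁ 1, n₂ 1]]


open Multiplicative SemidirectProduct Matrix

namespace S3

abbrev Mat := Matrix (Fin 2) (Fin 2) ℤ
abbrev Vz := Fin 2 → ℤ
abbrev V := Multiplicative Vz

variable (A : Mat) (hdet : A.det = 1) (k : Vz)

/-- A as a unit of the matrix ring. -/
def uA : Matˣ where
  val := A
  inv := A.adjugate
  val_inv := by rw [Matrix.mul_adjugate, hdet, one_smul]
  inv_val := by rw [Matrix.adjugate_mul, hdet, one_smul]

/-- mulVec by a unit matrix, as a multiplicative automorphism of V. -/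
def matPerm (u : Matˣ) : MulAut V where
  toFun x := ofAdd (u.val *ᵥ x.toAdd)
  invFun x := ofAdd (u.inv *ᵥ x.toAdd)
  left_inv x := by
    show ofAdd (u.inv *ᵥ (u.val *ᵥ x.toAdd)) = x
    rw [Matrix.mulVec_mulVec, u.inv_val, Matrix.one_mulVec]; rfl
  right_inv x := by
    show ofAdd (u.val *ᵥ (u.inv *ᵥ x.toAdd)) = x
    rw [Matrix.mulVec_mulVec, u.val_inv, Matrix.one_mulVec]; rfl
  map_mul' x y := by
    show ofAdd (u.val *ᵥ (x.toAdd + y.toAdd)) = ofAdd (u.val *ᵥ x.toAdd + u.val *ᵥ y.toAdd)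
    rw [Matrix.mulVec_add]

/-- matPerm as a monoid hom. -/
def matAut : Matˣ →* MulAut V :=
  MonoidHom.mk' matPerm (by
    intro u v
    ext x : 1
    show ofAdd ((u * v).val *ᵥ x.toAdd) = ofAdd (u.val *ᵥ (v.val *ᵥ x.toAdd))
    rw [Matrix.mulVec_mulVec, Units.val_mul])

/-- The action of ℤ on V via powers of A. -/
def θ : Multiplicative ℤ →* MulAut V := matAut.comp ((zpowersHom Matˣ) (uA A hdet))

/-- Powers of A (including negative ones). -/
def P (m : ℤ) : Mat := ((uA A hdet ^ m : Matˣ) : Mat)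

lemma theta_apply (m : ℤ) (w : Vz) :
    θ A hdet (ofAdd m) (ofAdd w) = ofAdd (P A hdet m *ᵥ w) := rfl

lemma theta_apply' (g : Multiplicative ℤ) (w : Vz) :
    θ A hdet g (ofAdd w) = ofAdd (P A hdet g.toAdd *ᵥ w) := rfl

/-- The group ℤ² ⋊_A ℤ. -/
abbrev Ngrp := V ⋊[θ A hdet] Multiplicative ℤ

end S3
/-- Generic conjugation formula in a semidirect product. -/
lemma conj_inl_general {N G : Type*} [Group N] [Group G] {φ : G →* MulAut N}
    (x : N ⋊[φ] G) (w : N) :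
    x * inl w * x⁻¹ = inl (x.left * φ x.right w * x.left⁻¹) := by
  ext
  · simp [mul_assoc]
  · simp

/-- Conjugation formula when N is commutative. -/
lemma conj_inl_comm {N G : Type*} [CommGroup N] [Group G] {φ : G →* MulAut N}
    (x : N ⋊[φ] G) (w : N) :
    x * inl w * x⁻¹ = inl (φ x.right w) := by
  rw [conj_inl_general, mul_comm, inv_mul_cancel_left]

namespace S3

variable (A : Mat) (hdet : A.det = 1) (k : Vz)

/-- The distinguished elements of N. -/
def tN : Ngrp A hdet := inr (ofAdd 1)
def aN (v : Vz) : Ngrp A hdet := inl (ofAdd v)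
/-- τ = aᵏ t. -/
def τ : Ngrp A hdet := aN A hdet k * tN A hdet

lemma aN_mul (v w : Vz) : aN A hdet v * aN A hdet w = aN A hdet (v + w) := by
  rw [aN, aN, aN, ← _root_.map_mul]
  rfl

lemma aN_zero : aN A hdet 0 = 1 := by
  rw [aN]; exact _root_.map_one inl

lemma right_tau_pow (m : ℤ) : ((τ A hdet k ^ m).right) = ofAdd m := by
  have h1 : (τ A hdet k ^ m).right = rightHom (τ A hdet k ^ m) := rfl
  rw [h1, map_zpow]
  have h : rightHom (τ A hdet k) = ofAdd 1 := by simp [τ, aN, tN]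
  rw [h, ← ofAdd_zsmul, smul_eq_mul, mul_one]

/-- The involution σ : N → N, a ↦ a⁻¹, t ↦ aᵏt. -/
def σN : Ngrp A hdet →* Ngrp A hdet :=
  SemidirectProduct.lift (inl.comp (invMonoidHom : V →* V))
    ((zpowersHom _) (τ A hdet k))
    (by
      intro g
      refine MonoidHom.ext fun w => ?_
      show inl ((θ A hdet g w)⁻¹) = (τ A hdet k ^ g.toAdd) * inl w⁻¹ * (τ A hdet k ^ g.toAdd)⁻¹
      rw [conj_inl_comm, right_tau_pow, ofAdd_toAdd, ← _root_.map_inv (θ A hdet g)])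

lemma σN_aN (v : Vz) : σN A hdet k (aN A hdet v) = aN A hdet (-v) := by
  show σN A hdet k (inl (ofAdd v)) = inl (ofAdd (-v))
  rw [σN, SemidirectProduct.lift_inl]
  rfl

lemma σN_tN : σN A hdet k (tN A hdet) = τ A hdet k := by
  show σN A hdet k (inr (ofAdd 1)) = τ A hdet k
  rw [σN, SemidirectProduct.lift_inr]
  show τ A hdet k ^ (1:ℤ) = τ A hdet k
  rw [zpow_one]

lemma σN_tau : σN A hdet k (τ A hdet k) = tN A hdet := by
  rw [τ, _root_.map_mul, σN_aN, σN_tN, τ, ← mul_assoc, aN_mul, neg_add_cancel, aN_zero, one_mul]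

lemma σN_σN (n : Ngrp A hdet) : σN A hdet k (σN A hdet k n) = n := by
  have h : (σN A hdet k).comp (σN A hdet k) = MonoidHom.id _ := by
    apply SemidirectProduct.hom_ext
    · refine MonoidHom.ext fun v => ?_
      show σN A hdet k (σN A hdet k (aN A hdet v.toAdd)) = aN A hdet v.toAdd
      rw [σN_aN, σN_aN, neg_neg]
    · apply MonoidHom.ext_mint
      show σN A hdet k (σN A hdet k (tN A hdet)) = tN A hdet
      rw [σN_tN, σN_tau]
  exact DFunLike.congr_fun h n

/-- σ as an automorphism. -/
def σA : MulAut (Ngrp A hdet) where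
  toFun := σN A hdet k
  invFun := σN A hdet k
  left_inv := σN_σN A hdet k
  right_inv := σN_σN A hdet k
  map_mul' := (σN A hdet k).map_mul

lemma σA_mul_self : σA A hdet k * σA A hdet k = 1 :=
  MulEquiv.ext fun n => σN_σN A hdet k n

/-- Lift to ZMod 2. -/
def ΦF : ZMod 2 →+ Additive (MulAut (Ngrp A hdet)) :=
  ZMod.lift 2 ⟨(zmultiplesHom _) (Additive.ofMul (σA A hdet k)), by
    show (2 : ℤ) • Additive.ofMul (σA A hdet k) = 0
    rw [two_zsmul, ← ofMul_mul, σA_mul_self, ofMul_one]⟩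

/-- The action of ZMod 2 on N via σ. -/
def Φ : Multiplicative (ZMod 2) →* MulAut (Ngrp A hdet) :=
  AddMonoidHom.toMultiplicativeLeft (ΦF A hdet k)

lemma Φ_one : Φ A hdet k (ofAdd 1) = σA A hdet k := by
  show Additive.toMul (ΦF A hdet k ((1:ℤ) : ZMod 2)) = σA A hdet k
  rw [ΦF, ZMod.lift_coe]
  show Additive.toMul ((1:ℤ) • Additive.ofMul (σA A hdet k)) = σA A hdet k
  rw [one_zsmul]
  rfl

lemma Φ_zero : Φ A hdet k (ofAdd 0) = 1 := by
  show Φ A hdet k 1 = 1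
  exact _root_.map_one _

/-- The model group G = (ℤ² ⋊ ℤ) ⋊ ZMod 2. -/
abbrev Ggrp := (Ngrp A hdet) ⋊[Φ A hdet k] Multiplicative (ZMod 2)

end S3
namespace S3

variable (A : Mat) (hdet : A.det = 1) (k : Vz)

/-- Basis vectors. -/
def e0 : Vz := Pi.single 0 1
def e1 : Vz := Pi.single 1 1

/-- Elements of G. -/
def gA (v : Vz) : Ggrp A hdet k := inl (inl (ofAdd v))
def gT : Ggrp A hdet k := inl (inr (ofAdd 1))
def gB : Ggrp A hdet k := inr (ofAdd 1)

/-- Triple notation. -/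
def mk3 (v : Vz) (m : ℤ) (e : ZMod 2) : Ggrp A hdet k :=
  ⟨⟨ofAdd v, ofAdd m⟩, ofAdd e⟩

lemma mk3_surj (g : Ggrp A hdet k) :
    g = mk3 A hdet k g.left.left.toAdd g.left.right.toAdd g.right.toAdd := rfl

lemma mk3_inj {v m e v' m' e'} (h : mk3 A hdet k v m e = mk3 A hdet k v' m' e') :
    v = v' ∧ m = m' ∧ e = e' := by
  exact ⟨congrArg (fun g : Ggrp A hdet k => g.left.left.toAdd) h,
    congrArg (fun g : Ggrp A hdet k => g.left.right.toAdd) h,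
    congrArg (fun g : Ggrp A hdet k => g.right.toAdd) h⟩

/-- cocycle vector -/
def ccv (m : ℤ) : Vz := ((τ A hdet k ^ m).left).toAdd

lemma ccv_zero : ccv A hdet k 0 = 0 := by rw [ccv, zpow_zero]; rfl

lemma ccv_one : ccv A hdet k 1 = k := by
  rw [ccv, zpow_one, τ, aN, tN]
  rw [SemidirectProduct.mul_left]
  simp

lemma ccv_negone : ccv A hdet k (-1) = -(P A hdet (-1) *ᵥ k) := by
  rw [ccv, _root_.zpow_neg, zpow_one]
  show (((τ A hdet k)⁻¹).left).toAdd = -(P A hdet (-1) *ᵥ k)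
  rw [SemidirectProduct.inv_left]
  have h : (τ A hdet k).left = ofAdd k := by
    rw [τ, aN, tN, SemidirectProduct.mul_left]
    simp
  have hr : (τ A hdet k).right = ofAdd 1 := by
    rw [τ, aN, tN, SemidirectProduct.mul_right]
    simp
  rw [h, hr]
  show toAdd ((θ A hdet ((ofAdd (1:ℤ))⁻¹)) ((ofAdd k)⁻¹)) = -(P A hdet (-1) *ᵥ k)
  rw [show (ofAdd (1:ℤ))⁻¹ = ofAdd (-1 : ℤ) from rfl,
      show (ofAdd k)⁻¹ = ofAdd (-k) from rfl, theta_apply]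
  show P A hdet (-1) *ᵥ (-k) = -(P A hdet (-1) *ᵥ k)
  rw [Matrix.mulVec_neg]

lemma σN_mk (w : Vz) (m : ℤ) :
    σN A hdet k ⟨ofAdd w, ofAdd m⟩ = ⟨(ofAdd w)⁻¹ * (τ A hdet k ^ m).left, (τ A hdet k ^ m).right⟩ := by
  have hd : (⟨ofAdd w, ofAdd m⟩ : Ngrp A hdet) = inl (ofAdd w) * inr (ofAdd m) :=
    mk_eq_inl_mul_inr _ _
  rw [hd, _root_.map_mul]
  have h1 : σN A hdet k (inl (ofAdd w)) = inl ((ofAdd w)⁻¹) := by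
    rw [σN, SemidirectProduct.lift_inl]; rfl
  have h2 : σN A hdet k (inr (ofAdd m)) = τ A hdet k ^ m := by
    rw [σN, SemidirectProduct.lift_inr]; rfl
  rw [h1, h2]
  ext
  · rw [SemidirectProduct.mul_left]
    simp
  · rw [SemidirectProduct.mul_right]
    simp

/-- multiplication: even case. -/
lemma mul0 (v : Vz) (m : ℤ) (v' : Vz) (m' : ℤ) (e' : ZMod 2) :
    mk3 A hdet k v m 0 * mk3 A hdet k v' m' e' =
      mk3 A hdet k (v + P A hdet m *ᵥ v') (m + m') e' := by
  refine SemidirectProduct.ext ?_ ?_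
  · rw [SemidirectProduct.mul_left]
    show (⟨ofAdd v, ofAdd m⟩ : Ngrp A hdet) * (Φ A hdet k (ofAdd 0) ⟨ofAdd v', ofAdd m'⟩) = _
    rw [Φ_zero]
    show (⟨ofAdd v, ofAdd m⟩ : Ngrp A hdet) * ⟨ofAdd v', ofAdd m'⟩ = _
    refine SemidirectProduct.ext ?_ ?_
    · rw [SemidirectProduct.mul_left]
      show ofAdd v * θ A hdet (ofAdd m) (ofAdd v') = ofAdd (v + P A hdet m *ᵥ v')
      rw [theta_apply]
      rfl
    · rfl
  · rw [SemidirectProduct.mul_right]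
    show ofAdd (0 : ZMod 2) * ofAdd e' = ofAdd e'
    rw [← ofAdd_add, zero_add]

/-- multiplication: odd case. -/
lemma mul1 (v : Vz) (m : ℤ) (v' : Vz) (m' : ℤ) (e' : ZMod 2) :
    mk3 A hdet k v m 1 * mk3 A hdet k v' m' e' =
      mk3 A hdet k (v + P A hdet m *ᵥ (-v' + ccv A hdet k m')) (m + m') (1 + e') := by
  refine SemidirectProduct.ext ?_ ?_
  · rw [SemidirectProduct.mul_left]
    show (⟨ofAdd v, ofAdd m⟩ : Ngrp A hdet) * (Φ A hdet k (ofAdd 1) ⟨ofAdd v', ofAdd m'⟩) = _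
    rw [Φ_one]
    show (⟨ofAdd v, ofAdd m⟩ : Ngrp A hdet) * (σN A hdet k ⟨ofAdd v', ofAdd m'⟩) = _
    rw [σN_mk, right_tau_pow]
    refine SemidirectProduct.ext ?_ ?_
    · rw [SemidirectProduct.mul_left]
      show ofAdd v * θ A hdet (ofAdd m) ((ofAdd v')⁻¹ * (τ A hdet k ^ m').left) = _
      rw [show ((ofAdd v')⁻¹ * (τ A hdet k ^ m').left) = ofAdd (-v' + ccv A hdet k m') from rfl]
      rw [theta_apply]
      rfl
    · rfl
  · rfl

lemma gA_eq_mk3 (v : Vz) : gA A hdet k v = mk3 A hdet k v 0 0 := rfl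
lemma gT_eq_mk3 : gT A hdet k = mk3 A hdet k 0 1 0 := rfl
lemma gB_eq_mk3 : gB A hdet k = mk3 A hdet k 0 0 1 := rfl

end S3
namespace S3

variable (A : Mat) (hdet : A.det = 1) (k : Vz)

lemma zmod2_cases (e : ZMod 2) : e = 0 ∨ e = 1 := by revert e; decide

lemma P_zero : P A hdet 0 = 1 := by rw [P, zpow_zero, Units.val_one]
lemma P_one : P A hdet 1 = A := by rw [P, zpow_one]; rfl

/-- inverses of mk3 elements: characterization by multiplication. -/
lemma mul_mk3_gen (v : Vz) (m : ℤ) (e : ZMod 2) (v' : Vz) (m' : ℤ) (e' : ZMod 2) :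
    mk3 A hdet k v m e * mk3 A hdet k v' m' e' =
      if e = 0 then mk3 A hdet k (v + P A hdet m *ᵥ v') (m + m') e'
      else mk3 A hdet k (v + P A hdet m *ᵥ (-v' + ccv A hdet k m')) (m + m') (1 + e') := by
  rcases zmod2_cases e with h | h <;> subst h
  · rw [if_pos rfl, mul0]
  · rw [if_neg (by decide), mul1]

/-- The subgroup hom picking out the ℤ component. -/
def zcH : Ggrp A hdet k →* Multiplicative ℤ :=
  SemidirectProduct.lift (rightHom) 1 (by
    intro g
    refine MonoidHom.ext fun n => ?_
    show rightHom (Φ A hdet k g n) = (MulAut.conj ((1 : _ →* Multiplicative ℤ) g)) (rightHom n)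
    rw [show ((1 : Multiplicative (ZMod 2) →* Multiplicative ℤ) g) = 1 from rfl, _root_.map_one]
    show rightHom (Φ A hdet k g n) = rightHom n
    rcases zmod2_cases g.toAdd with h | h
    · have hg : g = ofAdd (0 : ZMod 2) := by rw [← h]; rfl
      rw [hg, Φ_zero]
      rfl
    · have hg : g = ofAdd (1 : ZMod 2) := by rw [← h]; rfl
      rw [hg, Φ_one]
      have hcomp : ((rightHom : Ngrp A hdet →* Multiplicative ℤ).comp (σN A hdet k))
          = rightHom := by
        apply SemidirectProduct.hom_ext
        · refine MonoidHom.ext fun v => ?_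
          show rightHom (σN A hdet k (inl v)) = rightHom (inl v : Ngrp A hdet)
          rw [σN, SemidirectProduct.lift_inl]
          simp
        · apply MonoidHom.ext_mint
          show rightHom (σN A hdet k (tN A hdet)) = rightHom (tN A hdet)
          rw [σN_tN]
          rw [show rightHom (τ A hdet k) = (τ A hdet k).right from rfl,
            show rightHom (tN A hdet) = (tN A hdet).right from rfl]
          rw [show τ A hdet k = τ A hdet k ^ (1:ℤ) from (zpow_one _).symm, right_tau_pow]
          rfl
      exact DFunLike.congr_fun hcomp n)

lemma zcH_mk3 (v : Vz) (m : ℤ) (e : ZMod 2) : zcH A hdet k (mk3 A hdet k v m e) = ofAdd m := by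
  have : mk3 A hdet k v m e = inl ⟨ofAdd v, ofAdd m⟩ * inr (ofAdd e) := mk_eq_inl_mul_inr _ _
  rw [this, _root_.map_mul, zcH, SemidirectProduct.lift_inl, SemidirectProduct.lift_inr]
  simp

/-- The ZMod 2 component hom. -/
def bcH : Ggrp A hdet k →* Multiplicative (ZMod 2) := rightHom

lemma bcH_mk3 (v : Vz) (m : ℤ) (e : ZMod 2) : bcH A hdet k (mk3 A hdet k v m e) = ofAdd e := rfl

/-- gA as a hom from V. -/
def gAh : V →* Ggrp A hdet k := inl.comp inl

lemma gA_mul (v w : Vz) : gA A hdet k v * gA A hdet k w = gA A hdet k (v + w) := by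
  rw [gA, gA, gA, ← _root_.map_mul inl, ← _root_.map_mul inl]
  rfl

lemma gA_zpow (v : Vz) (n : ℤ) : gA A hdet k v ^ n = gA A hdet k (n • v) := by
  rw [show gA A hdet k v = gAh A hdet k (ofAdd v) from rfl, ← map_zpow, ← ofAdd_zsmul]
  rfl

lemma gA_inj {v w : Vz} (h : gA A hdet k v = gA A hdet k w) : v = w := by
  rw [gA_eq_mk3, gA_eq_mk3] at h
  exact (mk3_inj A hdet k h).1

lemma mk3_eq_prod (v : Vz) (m : ℤ) (e : ZMod 2) :
    mk3 A hdet k v m e = gA A hdet k v * gT A hdet k ^ m * inr (ofAdd e) := by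
  have h1 : gT A hdet k ^ m = inl (inr (ofAdd m)) := by
    rw [show gT A hdet k = (inl.comp inr : Multiplicative ℤ →* Ggrp A hdet k) (ofAdd 1) from rfl,
      ← map_zpow, ← ofAdd_zsmul, smul_eq_mul, mul_one]
    rfl
  rw [mk3, mk_eq_inl_mul_inr,
    show (⟨ofAdd v, ofAdd m⟩ : Ngrp A hdet) = inl (ofAdd v) * inr (ofAdd m) from
      mk_eq_inl_mul_inr _ _,
    _root_.map_mul inl, gA, h1]

/-- conjugation of gA elements, general form. -/
lemma conj_gA_exists (h : Ggrp A hdet k) (v : Vz) :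
    ∃ w : Vz, h * gA A hdet k v * h⁻¹ = gA A hdet k w := by
  rw [gA, conj_inl_general]
  rcases zmod2_cases h.right.toAdd with he | he
  · have hg : h.right = ofAdd (0 : ZMod 2) := by rw [← he]; rfl
    rw [hg, Φ_zero]
    refine ⟨P A hdet (h.left.right.toAdd) *ᵥ v, ?_⟩
    rw [show ((1 : MulAut (Ngrp A hdet)) (inl (ofAdd v))) = inl (ofAdd v) from rfl]
    rw [conj_inl_comm (φ := θ A hdet)]
    rw [gA, theta_apply']
  · have hg : h.right = ofAdd (1 : ZMod 2) := by rw [← he]; rfl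
    rw [hg, Φ_one]
    rw [show ((σA A hdet k) (inl (ofAdd v))) = σN A hdet k (inl (ofAdd v)) from rfl]
    rw [σN, SemidirectProduct.lift_inl]
    refine ⟨P A hdet (h.left.right.toAdd) *ᵥ (-v), ?_⟩
    rw [show ((inl.comp (invMonoidHom : V →* V)) (ofAdd v)) = inl (ofAdd (-v)) from rfl]
    rw [conj_inl_comm (φ := θ A hdet)]
    rw [gA, theta_apply']

lemma gA_comm (g h : Ggrp A hdet k) (hg : ∃ v, g = gA A hdet k v)
    (hh : ∃ w, h = gA A hdet k w) : g * h = h * g := by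
  obtain ⟨v, rfl⟩ := hg
  obtain ⟨w, rfl⟩ := hh
  rw [gA_mul, gA_mul, add_comm]

end S3
namespace S3

variable (A : Mat) (hdet : A.det = 1) (k : Vz)

lemma gA_zero : gA A hdet k 0 = 1 := rfl

lemma mk3_one : mk3 A hdet k 0 0 0 = 1 := rfl

lemma gTm_eq_mk3 (m : ℤ) : gT A hdet k ^ m = mk3 A hdet k 0 m 0 := by
  rw [mk3_eq_prod, gA_zero, one_mul, show (ofAdd (0 : ZMod 2)) = 1 from rfl, _root_.map_one,
    mul_one]

lemma rel_TA (v : Vz) :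
    gT A hdet k * gA A hdet k v = gA A hdet k (A *ᵥ v) * gT A hdet k := by
  rw [gT_eq_mk3, gA_eq_mk3, gA_eq_mk3, mul0, mul0, P_one, P_zero]
  congr 1 <;> simp

lemma rel_TmA (m : ℤ) (v : Vz) :
    gT A hdet k ^ m * gA A hdet k v = gA A hdet k (P A hdet m *ᵥ v) * gT A hdet k ^ m := by
  rw [gTm_eq_mk3, gA_eq_mk3, gA_eq_mk3, mul0, mul0, P_zero]
  congr 1 <;> simp

lemma rel_BA (v : Vz) :
    gB A hdet k * gA A hdet k v = gA A hdet k (-v) * gB A hdet k := by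
  rw [gB_eq_mk3, gA_eq_mk3, gA_eq_mk3, mul1, mul0, P_zero, ccv_zero]
  congr 1 <;> simp

lemma rel_BB : gB A hdet k * gB A hdet k = 1 := by
  have h2 : (0:Vz) + P A hdet 0 *ᵥ (-0 + 0) = 0 := by simp
  rw [gB_eq_mk3, mul1, ccv_zero, h2, show ((0:ℤ)+0) = 0 from rfl,
    show ((1:ZMod 2)+1) = 0 from by decide, mk3_one]

lemma rel_BT :
    gB A hdet k * gT A hdet k = gA A hdet k k * gT A hdet k * gB A hdet k := by
  rw [gB_eq_mk3, gT_eq_mk3, gA_eq_mk3, mul1, mul0, mul0, P_zero, ccv_one]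
  congr 1 <;> simp

/-- Hom extensionality on V. -/
lemma vec_decomp (v : Vz) : v = v 0 • e0 + v 1 • e1 := by
  funext i
  fin_cases i <;> simp [e0, e1]

lemma mhom_ext2 {M : Type*} [Group M] {f g : V →* M}
    (h0 : f (ofAdd e0) = g (ofAdd e0)) (h1 : f (ofAdd e1) = g (ofAdd e1)) : f = g := by
  refine MonoidHom.ext fun x => ?_
  have hx : x = ofAdd (x.toAdd 0 • e0) * ofAdd (x.toAdd 1 • e1) := by
    rw [← ofAdd_add, ← vec_decomp]
    rfl
  rw [hx, _root_.map_mul, _root_.map_mul, ofAdd_zsmul, ofAdd_zsmul, map_zpow, map_zpow, h0, h1,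
    map_zpow, map_zpow]

/-- The trace sequence. -/
def sq (m : ℤ) : ℤ := (P A hdet m).trace

lemma det_P (m : ℤ) : (P A hdet m).det = 1 := by
  have h1 : Units.map (Matrix.detMonoidHom : Mat →* ℤ) (uA A hdet) = 1 := by
    apply Units.ext
    show A.det = 1
    exact hdet
  have h2 : Units.map (Matrix.detMonoidHom : Mat →* ℤ) (uA A hdet ^ m) = 1 := by
    rw [map_zpow, h1, _root_.one_zpow]
  have h3 := congrArg Units.val h2
  exact h3

lemma P_mul_A (m : ℤ) : P A hdet (m + 1) = P A hdet m * A := by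
  rw [P, P, _root_.zpow_add_one, Units.val_mul]; rfl

lemma P_mul_adj (m : ℤ) : P A hdet (m - 1) = P A hdet m * A.adjugate := by
  rw [P, P, _root_.zpow_sub_one, Units.val_mul]; rfl

lemma adj_add (B : Mat) : B + B.adjugate = B.trace • (1 : Mat) := by
  rw [Matrix.adjugate_fin_two, Matrix.trace_fin_two]
  ext i j
  fin_cases i <;> fin_cases j <;>
    simp [Matrix.one_apply, Matrix.add_apply] <;> ring

lemma sq_rec (m : ℤ) : sq A hdet (m + 1) + sq A hdet (m - 1) = A.trace * sq A hdet m := by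
  rw [sq, sq, sq, P_mul_A, P_mul_adj, ← Matrix.trace_add, ← mul_add, adj_add]
  rw [show P A hdet m * (A.trace • (1:Mat)) = A.trace • (P A hdet m * 1) from
    Matrix.mul_smul _ _ _, mul_one, Matrix.trace_smul]
  rfl

lemma sq_zero : sq A hdet 0 = 2 := by
  rw [sq, P_zero, Matrix.trace_fin_two]
  simp [Matrix.one_apply]

lemma sq_one : sq A hdet 1 = A.trace := by rw [sq, P_one]

lemma adj_trace (B : Mat) : B.adjugate.trace = B.trace := by
  rw [Matrix.adjugate_fin_two, Matrix.trace_fin_two, Matrix.trace_fin_two]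
  simp [add_comm]

lemma P_neg (m : ℤ) : P A hdet (-m) = (P A hdet m).adjugate := by
  have h1 : P A hdet (-m) * P A hdet m = 1 := by
    rw [P, P, ← Units.val_mul, ← _root_.zpow_add, neg_add_cancel, zpow_zero, Units.val_one]
  have h2 : (P A hdet m).adjugate * P A hdet m = 1 := by
    rw [Matrix.adjugate_mul, det_P, one_smul]
  calc P A hdet (-m) = P A hdet (-m) * (P A hdet m * (P A hdet m).adjugate) := by
        rw [Matrix.mul_adjugate, det_P, one_smul, mul_one]
    _ = (P A hdet (-m) * P A hdet m) * (P A hdet m).adjugate := by rw [mul_assoc]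
    _ = (P A hdet m).adjugate := by rw [h1, one_mul]

lemma sq_neg (m : ℤ) : sq A hdet (-m) = sq A hdet m := by
  rw [sq, P_neg, adj_trace]; rfl

lemma sq_nat_facts (htr : 2 < A.trace) : ∀ n : ℕ, 2 ≤ sq A hdet n ∧ sq A hdet n ≤ sq A hdet (n+1)
  | 0 => by
      constructor
      · rw [Nat.cast_zero, sq_zero]
      · rw [Nat.cast_zero, sq_zero, zero_add, sq_one]
        omega
  | (n+1) => by
      obtain ⟨h1, h2⟩ := sq_nat_facts htr n
      have hrec := sq_rec A hdet (n + 1)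
      have hsimp : ((n:ℤ) + 1) - 1 = (n:ℤ) := by ring
      rw [hsimp] at hrec
      have hT : 3 ≤ A.trace := htr
      have h3 : 2 ≤ sq A hdet ((n:ℕ)+1 : ℕ) := by
        push_cast
        omega
      constructor
      · exact h3
      · push_cast
        push_cast at h3 h2
        nlinarith [h3, h2, hrec, hT]

lemma sq_pos_gt (htr : 2 < A.trace) : ∀ n : ℕ, 2 < sq A hdet ((n:ℤ) + 1)
  | 0 => by rw [Nat.cast_zero, zero_add, sq_one]; exact htr
  | (n+1) => by
      have ih := sq_pos_gt htr n
      have h := sq_nat_facts A hdet htr (n+1)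
      push_cast at h ih ⊢
      omega

lemma sq_ge_two (htr : 2 < A.trace) (m : ℤ) : 2 ≤ sq A hdet m := by
  rcases Int.natAbs_eq m with h | h
  · rw [h]
    exact (sq_nat_facts A hdet htr m.natAbs).1
  · rw [h, sq_neg]
    exact (sq_nat_facts A hdet htr m.natAbs).1

lemma sq_gt_two (htr : 2 < A.trace) (m : ℤ) (hm : m ≠ 0) : 2 < sq A hdet m := by
  have key : ∀ n : ℕ, 2 < sq A hdet ((n:ℤ) + 1) := sq_pos_gt A hdet htr
  rcases Int.natAbs_eq m with h | h
  · have hne : m.natAbs ≠ 0 := by omega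
    obtain ⟨n, hn⟩ := Nat.exists_eq_succ_of_ne_zero hne
    rw [hn] at h
    rw [h, show ((((n+1):ℕ)):ℤ) = ((n:ℤ)+1) by push_cast; ring]
    exact key n
  · have hne : m.natAbs ≠ 0 := by omega
    obtain ⟨n, hn⟩ := Nat.exists_eq_succ_of_ne_zero hne
    rw [hn] at h
    rw [h, show (-((((n+1):ℕ)):ℤ)) = -((n:ℤ)+1) by push_cast; ring, sq_neg,
      show ((n:ℤ)+1) = ((n:ℤ)+1) from rfl]
    exact key n

lemma det_one_add_P (m : ℤ) : (1 + P A hdet m).det = 2 + sq A hdet m := by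
  have hd := det_P A hdet m
  rw [Matrix.det_fin_two] at hd ⊢
  rw [sq, Matrix.trace_fin_two]
  simp only [Matrix.add_apply, Matrix.one_apply]
  norm_num
  linear_combination hd

lemma det_one_sub_P (m : ℤ) : (1 - P A hdet m).det = 2 - sq A hdet m := by
  have hd := det_P A hdet m
  rw [Matrix.det_fin_two] at hd ⊢
  rw [sq, Matrix.trace_fin_two]
  simp only [Matrix.sub_apply, Matrix.one_apply]
  norm_num
  linear_combination hd

lemma exists_mulVec_sq_ne (M : Mat) (h : M.det ≠ 0) : ∃ u : Vz, M *ᵥ (M *ᵥ u) ≠ 0 := by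
  by_contra hc
  push_neg at hc
  have hMM : M * M = 0 := by
    ext i j
    have := congrFun (hc (Pi.single j 1)) i
    rw [Matrix.mulVec_mulVec, Matrix.mulVec_single] at this
    simpa using this
  have h0 : M.det * M.det = 0 := by
    rw [← Matrix.det_mul, hMM]
    exact Matrix.det_zero
  exact h (mul_self_eq_zero.mp h0)

end S3
namespace S3

variable (A : Mat) (hdet : A.det = 1) (k : Vz)

/-- notation for Pi1 generators -/
def a1p : Pi1 A k := PresentedGroup.of Gen1.a1
def a2p : Pi1 A k := PresentedGroup.of Gen1.a2
def Tp : Pi1 A k := PresentedGroup.of Gen1.t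
def Bp : Pi1 A k := PresentedGroup.of Gen1.b

lemma pg_rel {r : FreeGroup Gen1} (hr : r ∈ relsPi1 A k) :
    PresentedGroup.mk (relsPi1 A k) r = 1 :=
  (QuotientGroup.eq_one_iff r).mpr (Subgroup.subset_normalClosure hr)

open FreeGroup in
lemma pi1_R1 : a1p A k * a2p A k = a2p A k * a1p A k := by
  have h := pg_rel A k (show of Gen1.a1 * of Gen1.a2 * (of Gen1.a2 * of Gen1.a1)⁻¹ ∈ relsPi1 A k
    from Set.mem_insert _ _)
  simp only [_root_.map_mul, _root_.map_inv] at h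
  rw [mul_inv_eq_one] at h
  exact h

open FreeGroup in
lemma pi1_R2 : Tp A k * a1p A k * (Tp A k)⁻¹ = a1p A k ^ A 0 0 * a2p A k ^ A 1 0 := by
  have h := pg_rel A k (show of Gen1.t * of Gen1.a1 * (of Gen1.t)⁻¹ *
      (of Gen1.a1 ^ A 0 0 * of Gen1.a2 ^ A 1 0)⁻¹ ∈ relsPi1 A k
    from Set.mem_insert_of_mem _ (Set.mem_insert _ _))
  simp only [_root_.map_mul, _root_.map_inv, map_zpow] at h
  rw [mul_inv_eq_one] at h
  exact h

open FreeGroup in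
lemma pi1_R3 : Tp A k * a2p A k * (Tp A k)⁻¹ = a1p A k ^ A 0 1 * a2p A k ^ A 1 1 := by
  have h := pg_rel A k (show of Gen1.t * of Gen1.a2 * (of Gen1.t)⁻¹ *
      (of Gen1.a1 ^ A 0 1 * of Gen1.a2 ^ A 1 1)⁻¹ ∈ relsPi1 A k
    from Set.mem_insert_of_mem _ (Set.mem_insert_of_mem _ (Set.mem_insert _ _)))
  simp only [_root_.map_mul, _root_.map_inv, map_zpow] at h
  rw [mul_inv_eq_one] at h
  exact h

open FreeGroup in
lemma pi1_R4 : Bp A k * a1p A k * (Bp A k)⁻¹ = (a1p A k)⁻¹ := by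
  have h := pg_rel A k (show of Gen1.b * of Gen1.a1 * (of Gen1.b)⁻¹ * of Gen1.a1 ∈ relsPi1 A k
    from Set.mem_insert_of_mem _ (Set.mem_insert_of_mem _ (Set.mem_insert_of_mem _
      (Set.mem_insert _ _))))
  simp only [_root_.map_mul, _root_.map_inv] at h
  rw [mul_eq_one_iff_eq_inv] at h
  exact h

open FreeGroup in
lemma pi1_R5 : Bp A k * a2p A k * (Bp A k)⁻¹ = (a2p A k)⁻¹ := by
  have h := pg_rel A k (show of Gen1.b * of Gen1.a2 * (of Gen1.b)⁻¹ * of Gen1.a2 ∈ relsPi1 A k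
    from Set.mem_insert_of_mem _ (Set.mem_insert_of_mem _ (Set.mem_insert_of_mem _
      (Set.mem_insert_of_mem _ (Set.mem_insert _ _)))))
  simp only [_root_.map_mul, _root_.map_inv] at h
  rw [mul_eq_one_iff_eq_inv] at h
  exact h

open FreeGroup in
lemma pi1_R6 : Bp A k * Bp A k = 1 := by
  have h := pg_rel A k (show of Gen1.b * of Gen1.b ∈ relsPi1 A k
    from Set.mem_insert_of_mem _ (Set.mem_insert_of_mem _ (Set.mem_insert_of_mem _
      (Set.mem_insert_of_mem _ (Set.mem_insert_of_mem _ (Set.mem_insert _ _))))))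
  simp only [_root_.map_mul] at h
  exact h

open FreeGroup in
lemma pi1_R7 : Bp A k * Tp A k * (Bp A k)⁻¹ = a1p A k ^ k 0 * a2p A k ^ k 1 * Tp A k := by
  have h := pg_rel A k (show of Gen1.b * of Gen1.t * (of Gen1.b)⁻¹ *
      (of Gen1.a1 ^ k 0 * of Gen1.a2 ^ k 1 * of Gen1.t)⁻¹ ∈ relsPi1 A k
    from Set.mem_insert_of_mem _ (Set.mem_insert_of_mem _ (Set.mem_insert_of_mem _
      (Set.mem_insert_of_mem _ (Set.mem_insert_of_mem _ (Set.mem_insert_of_mem _ rfl))))))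
  simp only [_root_.map_mul, _root_.map_inv, map_zpow] at h
  rw [mul_inv_eq_one] at h
  exact h

/-- The hom V →* Pi1, v ↦ a₁^{v 0} a₂^{v 1}. -/
def aPh : V →* Pi1 A k :=
  MonoidHom.mk' (fun x => a1p A k ^ (x.toAdd 0) * a2p A k ^ (x.toAdd 1)) (by
    intro x y
    have hc : Commute (a1p A k) (a2p A k) := pi1_R1 A k
    show a1p A k ^ (x.toAdd 0 + y.toAdd 0) * a2p A k ^ (x.toAdd 1 + y.toAdd 1) = _
    rw [_root_.zpow_add, _root_.zpow_add]
    rw [mul_assoc, ← mul_assoc (a1p A k ^ y.toAdd 0), ← (hc.symm.zpow_zpow _ _).eq]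
    group)

lemma aPh_apply (v : Vz) : aPh A k (ofAdd v) = a1p A k ^ (v 0) * a2p A k ^ (v 1) := rfl

lemma aPh_eq_aP (v : Vz) : aPh A k (ofAdd v) = aP A k v := rfl

end S3
namespace S3

variable (A : Mat) (hdet : A.det = 1) (k : Vz)

lemma vecA_e0 : A *ᵥ e0 = A 0 0 • e0 + A 1 0 • e1 := by
  funext i
  fin_cases i <;> simp [e0, e1]

lemma vecA_e1 : A *ᵥ e1 = A 0 1 • e0 + A 1 1 • e1 := by
  funext i
  fin_cases i <;> simp [e0, e1]

lemma veck : k = k 0 • e0 + k 1 • e1 := vec_decomp k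

lemma gA_e0_pows (c d : ℤ) :
    gA A hdet k e0 ^ c * gA A hdet k e1 ^ d = gA A hdet k (c • e0 + d • e1) := by
  rw [gA_zpow, gA_zpow, gA_mul]

/-- the map on generators -/
def toGf : Gen1 → Ggrp A hdet k
  | Gen1.a1 => gA A hdet k e0
  | Gen1.a2 => gA A hdet k e1
  | Gen1.t => gT A hdet k
  | Gen1.b => gB A hdet k

lemma toG_rels : ∀ r ∈ relsPi1 A k, FreeGroup.lift (toGf A hdet k) r = 1 := by
  intro r hr
  rcases hr with h | h | h | h | h | h | h <;> subst h <;>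
    simp only [_root_.map_mul, _root_.map_inv, map_zpow, FreeGroup.lift_apply_of, toGf]
  · rw [gA_mul, gA_mul, add_comm, mul_inv_cancel]
  · rw [gA_e0_pows, ← vecA_e0, mul_inv_eq_one, mul_inv_eq_iff_eq_mul, rel_TA]
  · rw [gA_e0_pows, ← vecA_e1, mul_inv_eq_one, mul_inv_eq_iff_eq_mul, rel_TA]
  · rw [rel_BA, mul_inv_cancel_right, gA_mul, neg_add_cancel, gA_zero]
  · rw [rel_BA, mul_inv_cancel_right, gA_mul, neg_add_cancel, gA_zero]
  · exact rel_BB A hdet k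
  · rw [gA_e0_pows, ← veck, mul_inv_eq_one, mul_inv_eq_iff_eq_mul]
    exact rel_BT A hdet k

/-- Pi1 → G -/
def toG : Pi1 A k →* Ggrp A hdet k := PresentedGroup.toGroup (toG_rels A hdet k)

lemma toG_a1 : toG A hdet k (a1p A k) = gA A hdet k e0 := PresentedGroup.toGroup.of _
lemma toG_a2 : toG A hdet k (a2p A k) = gA A hdet k e1 := PresentedGroup.toGroup.of _
lemma toG_t : toG A hdet k (Tp A k) = gT A hdet k := PresentedGroup.toGroup.of _
lemma toG_b : toG A hdet k (Bp A k) = gB A hdet k := PresentedGroup.toGroup.of _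

lemma aPh_e0 : aPh A k (ofAdd e0) = a1p A k := by
  rw [aPh_apply]
  simp [e0, e1]

lemma aPh_e1 : aPh A k (ofAdd e1) = a2p A k := by
  rw [aPh_apply]
  simp [e0, e1]

include hdet in
lemma conj_T_one (v : Vz) :
    Tp A k * aPh A k (ofAdd v) * (Tp A k)⁻¹ = aPh A k (ofAdd (A *ᵥ v)) := by
  have hext : ((MulAut.conj (Tp A k)).toMonoidHom.comp (aPh A k) : V →* Pi1 A k)
      = (aPh A k).comp (θ A hdet (ofAdd 1)).toMonoidHom := by
    refine mhom_ext2 ?_ ?_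
    · show Tp A k * aPh A k (ofAdd e0) * (Tp A k)⁻¹ = aPh A k (θ A hdet (ofAdd 1) (ofAdd e0))
      rw [theta_apply, P_one, aPh_e0]
      have hv0 : (A *ᵥ e0) 0 = A 0 0 := by simp [e0]
      have hv1 : (A *ᵥ e0) 1 = A 1 0 := by simp [e0]
      rw [aPh_apply, hv0, hv1]
      exact pi1_R2 A k
    · show Tp A k * aPh A k (ofAdd e1) * (Tp A k)⁻¹ = aPh A k (θ A hdet (ofAdd 1) (ofAdd e1))
      rw [theta_apply, P_one, aPh_e1]
      have hv0 : (A *ᵥ e1) 0 = A 0 1 := by simp [e1]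
      have hv1 : (A *ᵥ e1) 1 = A 1 1 := by simp [e1]
      rw [aPh_apply, hv0, hv1]
      exact pi1_R3 A k
  have h2 := DFunLike.congr_fun hext (ofAdd v)
  simp only [MonoidHom.comp_apply, MulEquiv.coe_toMonoidHom, MulAut.conj_apply] at h2
  rw [h2, theta_apply, P_one]

lemma P_add (m n : ℤ) : P A hdet (m + n) = P A hdet m * P A hdet n := by
  rw [P, P, P, ← Units.val_mul, ← _root_.zpow_add]

lemma conj_T_neg_one (v : Vz) :
    (Tp A k)⁻¹ * aPh A k (ofAdd v) * Tp A k = aPh A k (ofAdd (P A hdet (-1) *ᵥ v)) := by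
  have h := conj_T_one A hdet k (P A hdet (-1) *ᵥ v)
  rw [Matrix.mulVec_mulVec, show A * P A hdet (-1) = P A hdet 1 * P A hdet (-1) by rw [P_one],
    ← P_add, show (1 + (-1:ℤ)) = 0 by ring, P_zero, Matrix.one_mulVec] at h
  rw [← h]
  group

lemma conj_T_zpow (m : ℤ) (v : Vz) :
    Tp A k ^ m * aPh A k (ofAdd v) * (Tp A k ^ m)⁻¹ = aPh A k (ofAdd (P A hdet m *ᵥ v)) := by
  induction m using Int.induction_on generalizing v with
  | zero => rw [P_zero, Matrix.one_mulVec]; group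
  | succ n ih =>
      rw [show ((n:ℤ) + 1) = 1 + n by ring, P_add, ← Matrix.mulVec_mulVec, P_one,
        ← conj_T_one A hdet k (P A hdet n *ᵥ v), ← ih v, _root_.zpow_add, zpow_one]
      group
  | pred n ih =>
      rw [show (-(n:ℤ) - 1) = -1 + -n by ring, P_add, ← Matrix.mulVec_mulVec,
        ← conj_T_neg_one A hdet k (P A hdet (-n) *ᵥ v), ← ih v, _root_.zpow_add]
      group

/-- the hom N →* Pi1. -/
def liftN : Ngrp A hdet →* Pi1 A k :=
  SemidirectProduct.lift (aPh A k) ((zpowersHom _) (Tp A k)) (by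
    intro g
    refine MonoidHom.ext fun x => ?_
    show aPh A k (θ A hdet g x) = Tp A k ^ g.toAdd * aPh A k x * (Tp A k ^ g.toAdd)⁻¹
    exact (conj_T_zpow A hdet k g.toAdd x.toAdd).symm)

lemma liftN_aN (v : Vz) : liftN A hdet k (inl (ofAdd v)) = aPh A k (ofAdd v) := by
  rw [liftN, SemidirectProduct.lift_inl]

lemma liftN_aN' (v : Vz) : liftN A hdet k (aN A hdet v) = aPh A k (ofAdd v) :=
  liftN_aN A hdet k v

lemma liftN_tN (m : ℤ) : liftN A hdet k (inr (ofAdd m)) = Tp A k ^ m := by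
  rw [liftN, SemidirectProduct.lift_inr]
  simp

/-- hom from ZMod 2 sending 1 to B. -/
def fBF : ZMod 2 →+ Additive (Pi1 A k) :=
  ZMod.lift 2 ⟨(zmultiplesHom _) (Additive.ofMul (Bp A k)), by
    show (2 : ℤ) • Additive.ofMul (Bp A k) = 0
    rw [two_zsmul, ← ofMul_mul, pi1_R6, ofMul_one]⟩

def fB : Multiplicative (ZMod 2) →* Pi1 A k := AddMonoidHom.toMultiplicativeLeft (fBF A k)

lemma fB_one : fB A k (ofAdd 1) = Bp A k := by
  show Additive.toMul (fBF A k ((1:ℤ) : ZMod 2)) = Bp A k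
  rw [fBF, ZMod.lift_coe]
  show Additive.toMul ((1:ℤ) • Additive.ofMul (Bp A k)) = Bp A k
  rw [one_zsmul]
  rfl

lemma fB_zero : fB A k (ofAdd 0) = 1 := by
  show fB A k 1 = 1
  exact _root_.map_one _

/-- conjugation by B matches σN. -/
lemma conj_B_sigma :
    (liftN A hdet k).comp (σN A hdet k) =
      (MulAut.conj (Bp A k)).toMonoidHom.comp (liftN A hdet k) := by
  apply SemidirectProduct.hom_ext
  · refine mhom_ext2 ?_ ?_
    · show liftN A hdet k (σN A hdet k (inl (ofAdd e0)))
        = Bp A k * liftN A hdet k (inl (ofAdd e0)) * (Bp A k)⁻¹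
      rw [show (inl (ofAdd e0) : Ngrp A hdet) = aN A hdet e0 from rfl, σN_aN, liftN_aN',
        liftN_aN', aPh_e0]
      have h : aPh A k (ofAdd (-e0)) = (a1p A k)⁻¹ := by
        rw [aPh_apply]
        simp [e0, e1]
      rw [h, ← pi1_R4]
    · show liftN A hdet k (σN A hdet k (inl (ofAdd e1)))
        = Bp A k * liftN A hdet k (inl (ofAdd e1)) * (Bp A k)⁻¹
      rw [show (inl (ofAdd e1) : Ngrp A hdet) = aN A hdet e1 from rfl, σN_aN, liftN_aN',
        liftN_aN', aPh_e1]
      have h : aPh A k (ofAdd (-e1)) = (a2p A k)⁻¹ := by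
        rw [aPh_apply]
        simp [e0, e1]
      rw [h, ← pi1_R5]
  · apply MonoidHom.ext_mint
    show liftN A hdet k (σN A hdet k (inr (ofAdd 1)))
      = Bp A k * liftN A hdet k (inr (ofAdd 1)) * (Bp A k)⁻¹
    rw [show (inr (ofAdd 1) : Ngrp A hdet) = tN A hdet from rfl, σN_tN, τ, _root_.map_mul,
      show tN A hdet = inr (ofAdd 1) from rfl, liftN_tN, liftN_aN', zpow_one, pi1_R7]
    have h : aPh A k (ofAdd k) = a1p A k ^ k 0 * a2p A k ^ k 1 := rfl
    rw [h]

/-- G → Pi1 -/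
def fromG : Ggrp A hdet k →* Pi1 A k :=
  SemidirectProduct.lift (liftN A hdet k) (fB A k) (by
    intro g
    refine MonoidHom.ext fun n => ?_
    show liftN A hdet k (Φ A hdet k g n) = fB A k g * liftN A hdet k n * (fB A k g)⁻¹
    rcases zmod2_cases g.toAdd with h | h
    · have hg : g = ofAdd (0 : ZMod 2) := by rw [← h]; rfl
      rw [hg, Φ_zero, fB_zero]
      show liftN A hdet k n = 1 * liftN A hdet k n * 1⁻¹
      group
    · have hg : g = ofAdd (1 : ZMod 2) := by rw [← h]; rfl
      rw [hg, Φ_one, fB_one]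
      exact DFunLike.congr_fun (conj_B_sigma A hdet k) n)

lemma fromG_gA (v : Vz) : fromG A hdet k (gA A hdet k v) = aPh A k (ofAdd v) := by
  rw [gA, fromG, SemidirectProduct.lift_inl, liftN_aN]

lemma fromG_gT : fromG A hdet k (gT A hdet k) = Tp A k := by
  rw [gT, fromG, SemidirectProduct.lift_inl, liftN_tN, zpow_one]

lemma fromG_gB : fromG A hdet k (gB A hdet k) = Bp A k := by
  rw [gB, fromG, SemidirectProduct.lift_inr, fB_one]

lemma fromG_toG : (fromG A hdet k).comp (toG A hdet k) = MonoidHom.id _ := by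
  apply PresentedGroup.ext
  intro x
  cases x
  · show fromG A hdet k (toG A hdet k (a1p A k)) = a1p A k
    rw [toG_a1, fromG_gA, aPh_e0]
  · show fromG A hdet k (toG A hdet k (a2p A k)) = a2p A k
    rw [toG_a2, fromG_gA, aPh_e1]
  · show fromG A hdet k (toG A hdet k (Tp A k)) = Tp A k
    rw [toG_t, fromG_gT]
  · show fromG A hdet k (toG A hdet k (Bp A k)) = Bp A k
    rw [toG_b, fromG_gB]

lemma toG_aPh (v : Vz) : toG A hdet k (aPh A k (ofAdd v)) = gA A hdet k v := by
  rw [aPh_apply, _root_.map_mul, map_zpow, map_zpow, toG_a1, toG_a2, gA_e0_pows, ← vec_decomp]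

lemma toG_fromG : (toG A hdet k).comp (fromG A hdet k) = MonoidHom.id _ := by
  apply SemidirectProduct.hom_ext
  · apply SemidirectProduct.hom_ext
    · refine mhom_ext2 ?_ ?_
      · show toG A hdet k (fromG A hdet k (gA A hdet k e0)) = gA A hdet k e0
        rw [fromG_gA, aPh_e0, toG_a1]
      · show toG A hdet k (fromG A hdet k (gA A hdet k e1)) = gA A hdet k e1
        rw [fromG_gA, aPh_e1, toG_a2]
    · apply MonoidHom.ext_mint
      show toG A hdet k (fromG A hdet k (gT A hdet k)) = gT A hdet k
      rw [fromG_gT, toG_t]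
  · refine MonoidHom.ext fun g => ?_
    show toG A hdet k (fromG A hdet k (inr g)) = inr g
    rcases zmod2_cases g.toAdd with h | h
    · have hg : g = ofAdd (0 : ZMod 2) := by rw [← h]; rfl
      rw [hg, show (inr (ofAdd (0:ZMod 2)) : Ggrp A hdet k) = 1 from rfl, _root_.map_one,
        _root_.map_one]
    · have hg : g = ofAdd (1 : ZMod 2) := by rw [← h]; rfl
      rw [hg, show (inr (ofAdd (1:ZMod 2)) : Ggrp A hdet k) = gB A hdet k from rfl, fromG_gB,
        toG_b]

/-- The isomorphism Pi1 ≃ G. -/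
def isoPG : Pi1 A k ≃* Ggrp A hdet k :=
  MonoidHom.toMulEquiv (toG A hdet k) (fromG A hdet k) (fromG_toG A hdet k) (toG_fromG A hdet k)

lemma isoPG_apply (x : Pi1 A k) : isoPG A hdet k x = toG A hdet k x := rfl
lemma isoPG_symm_apply (x : Ggrp A hdet k) : (isoPG A hdet k).symm x = fromG A hdet k x := rfl

end S3
namespace S3

variable (A : Mat) (hdet : A.det = 1) (k : Vz)

lemma gA_inv (v : Vz) : (gA A hdet k v)⁻¹ = gA A hdet k (-v) := by
  symm
  rw [eq_inv_iff_mul_eq_one, gA_mul, neg_add_cancel, gA_zero]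

lemma conj_gA_mk3_0 (u p : Vz) (m : ℤ) :
    gA A hdet k u * mk3 A hdet k p m 0 * (gA A hdet k u)⁻¹ =
      mk3 A hdet k (p + ((1 : Mat) - P A hdet m) *ᵥ u) m 0 := by
  rw [gA_inv, gA_eq_mk3, gA_eq_mk3, mul0, mul0, P_zero]
  simp only [zero_add]
  congr 1
  · rw [Matrix.sub_mulVec, Matrix.one_mulVec, Matrix.one_mulVec, Matrix.mulVec_neg]
    abel
  · ring

lemma conj_gA_mk3_1 (u p : Vz) (m : ℤ) :
    gA A hdet k u * mk3 A hdet k p m 1 * (gA A hdet k u)⁻¹ =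
      mk3 A hdet k (p + ((1 : Mat) + P A hdet m) *ᵥ u) m 1 := by
  rw [gA_inv, gA_eq_mk3, gA_eq_mk3, mul0, mul1, P_zero, ccv_zero]
  simp only [zero_add]
  congr 1
  · rw [Matrix.add_mulVec, Matrix.one_mulVec, Matrix.one_mulVec, neg_neg, add_zero]
    abel
  · ring

lemma matrix_eq_of_mulVec {M N : Mat} (h : ∀ v, M *ᵥ v = N *ᵥ v) : M = N := by
  ext i j
  have := congrFun (h (Pi.single j 1)) i
  simpa using this

lemma comm_conj (ψ : Ggrp A hdet k ≃* Ggrp A hdet k) (v u : Vz) :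
    ψ (gA A hdet k v) * (gA A hdet k u * ψ (gA A hdet k v) * (gA A hdet k u)⁻¹) =
      (gA A hdet k u * ψ (gA A hdet k v) * (gA A hdet k u)⁻¹) * ψ (gA A hdet k v) := by
  set w := ψ.symm (gA A hdet k u) with hw
  have hψw : ψ w = gA A hdet k u := ψ.apply_symm_apply _
  obtain ⟨v', hv'⟩ := conj_gA_exists A hdet k w v
  have hcomm : gA A hdet k v * (w * gA A hdet k v * w⁻¹)
      = (w * gA A hdet k v * w⁻¹) * gA A hdet k v := by
    rw [hv']
    exact gA_comm A hdet k _ _ ⟨v, rfl⟩ ⟨v', rfl⟩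
  have h2 := congrArg ψ hcomm
  simp only [_root_.map_mul, _root_.map_inv, hψw] at h2
  exact h2

lemma psi_gA_form (htr : 2 < A.trace) (ψ : Ggrp A hdet k ≃* Ggrp A hdet k) (v : Vz) :
    ∃ w, ψ (gA A hdet k v) = gA A hdet k w := by
  set g := ψ (gA A hdet k v) with hg
  obtain ⟨p, m, e, hrep⟩ : ∃ p m e, g = mk3 A hdet k p m e :=
    ⟨_, _, _, mk3_surj A hdet k g⟩
  rcases zmod2_cases e with he | he
  · -- e = 0 : show m = 0
    subst he
    by_cases hm : m = 0
    · subst hm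
      exact ⟨p, by rw [hrep, gA_eq_mk3]⟩
    · exfalso
      have hdet2 : ((1 : Mat) - P A hdet m).det ≠ 0 := by
        rw [det_one_sub_P]
        have := sq_gt_two A hdet htr m hm
        omega
      obtain ⟨u, hu⟩ := exists_mulVec_sq_ne _ hdet2
      have hc := comm_conj A hdet k ψ v u
      rw [← hg, hrep, conj_gA_mk3_0] at hc
      rw [mul0, mul0] at hc
      have hvec := (mk3_inj A hdet k hc).1
      set w := ((1 : Mat) - P A hdet m) *ᵥ u with hwdef
      have h2 : P A hdet m *ᵥ w = w := by
        funext i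
        have h3 := congrFun hvec i
        simp only [Matrix.mulVec_add, Pi.add_apply] at h3 ⊢
        linarith
      apply hu
      rw [Matrix.sub_mulVec, Matrix.one_mulVec, h2, sub_self]
  · -- e = 1 : impossible
    exfalso
    subst he
    have hdet2 : ((1 : Mat) + P A hdet m).det ≠ 0 := by
      rw [det_one_add_P]
      have := sq_ge_two A hdet htr m
      omega
    obtain ⟨u, hu⟩ := exists_mulVec_sq_ne _ hdet2
    have hc := comm_conj A hdet k ψ v u
    rw [← hg, hrep, conj_gA_mk3_1] at hc
    rw [mul1, mul1] at hc
    have hvec := (mk3_inj A hdet k hc).1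
    set w := ((1 : Mat) + P A hdet m) *ᵥ u with hwdef
    have h2 : P A hdet m *ᵥ w = -w := by
      funext i
      have h3 := congrFun hvec i
      simp only [Matrix.mulVec_add, Pi.add_apply, Matrix.mulVec_neg, Pi.neg_apply] at h3 ⊢
      linarith
    apply hu
    rw [Matrix.add_mulVec, Matrix.one_mulVec, h2, add_neg_cancel]

/-- mulVec as hom on V. -/
def mulVecHom (M : Mat) : V →* V :=
  MonoidHom.mk' (fun x => ofAdd (M *ᵥ x.toAdd)) (by
    intro x y
    show ofAdd (M *ᵥ (x.toAdd + y.toAdd)) = ofAdd (M *ᵥ x.toAdd + M *ᵥ y.toAdd)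
    rw [Matrix.mulVec_add])

lemma psi_gA_matrix (htr : 2 < A.trace) (ψ : Ggrp A hdet k ≃* Ggrp A hdet k) :
    ∃ M : Mat, ∀ v, ψ (gA A hdet k v) = gA A hdet k (M *ᵥ v) := by
  obtain ⟨w0, hw0⟩ := psi_gA_form A hdet k htr ψ e0
  obtain ⟨w1, hw1⟩ := psi_gA_form A hdet k htr ψ e1
  refine ⟨colMat w0 w1, ?_⟩
  have hc0 : colMat w0 w1 *ᵥ e0 = w0 := by
    funext i
    fin_cases i <;> simp [colMat, e0]
  have hc1 : colMat w0 w1 *ᵥ e1 = w1 := by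
    funext i
    fin_cases i <;> simp [colMat, e1]
  have hext : (ψ.toMonoidHom.comp (gAh A hdet k) : V →* Ggrp A hdet k)
      = (gAh A hdet k).comp (mulVecHom (colMat w0 w1)) := by
    refine mhom_ext2 ?_ ?_
    · show ψ (gA A hdet k e0) = gA A hdet k (colMat w0 w1 *ᵥ e0)
      rw [hc0, hw0]
    · show ψ (gA A hdet k e1) = gA A hdet k (colMat w0 w1 *ᵥ e1)
      rw [hc1, hw1]
  intro v
  have := DFunLike.congr_fun hext (ofAdd v)
  exact this

lemma P_neg_one_inv : P A hdet (-1) = A⁻¹ := by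
  have h1 : P A hdet (-1) = (uA A hdet).inv := by
    rw [P, _root_.zpow_neg, zpow_one]
    rfl
  rw [h1, show (uA A hdet).inv = A.adjugate from rfl, Matrix.inv_def, hdet]
  simp

lemma mk3_xm0 (p : Vz) (m : ℤ) :
    mk3 A hdet k p m 0 = gA A hdet k p * gT A hdet k ^ m := by
  rw [mk3_eq_prod, show (ofAdd (0:ZMod 2)) = 1 from rfl, _root_.map_one, mul_one]

lemma mk3_x01 (x : Vz) : mk3 A hdet k x 0 1 = gA A hdet k x * gB A hdet k := by
  rw [gA_eq_mk3, gB_eq_mk3, mul0]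
  congr 1 <;> simp

lemma gB_ne_one : gB A hdet k ≠ 1 := by
  intro h
  rw [gB_eq_mk3, ← mk3_one A hdet k] at h
  have := (mk3_inj A hdet k h).2.2
  exact absurd this (by decide)

/-- Main classification of automorphisms of G. -/
lemma classify (htr : 2 < A.trace) (ψ : Ggrp A hdet k ≃* Ggrp A hdet k) :
    ∃ (M : Mat) (p x : Vz) (ε : ℤ),
      (ε = 1 ∨ ε = -1) ∧
      (∀ v, ψ (gA A hdet k v) = gA A hdet k (M *ᵥ v)) ∧
      ψ (gT A hdet k) = gA A hdet k p * gT A hdet k ^ ε ∧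
      ψ (gB A hdet k) = gA A hdet k x * gB A hdet k ∧
      (M.det = 1 ∨ M.det = -1) ∧
      (ε = 1 → A * M = M * A ∧
        (2 : ℤ) • p = ((1:Mat) - A).mulVec x + ((1:Mat) - M).mulVec k) ∧
      (ε = -1 → A⁻¹ * M = M * A ∧
        (2 : ℤ) • p = ((1:Mat) - A⁻¹).mulVec x - (A⁻¹ + M).mulVec k) := by
  obtain ⟨M, hM⟩ := psi_gA_matrix A hdet k htr ψ
  obtain ⟨M', hM'⟩ := psi_gA_matrix A hdet k htr ψ.symm
  -- M' * M = 1
  have hM'M : M' * M = 1 := by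
    apply matrix_eq_of_mulVec
    intro v
    rw [Matrix.one_mulVec, ← Matrix.mulVec_mulVec]
    apply gA_inj A hdet k
    rw [← hM', ← hM, ψ.symm_apply_apply]
  have hMM' : M * M' = 1 := mul_eq_one_comm.mp hM'M
  have hdetM : M.det = 1 ∨ M.det = -1 := by
    have h1 : M'.det * M.det = 1 := by rw [← Matrix.det_mul, hM'M, Matrix.det_one]
    have := Int.isUnit_iff.mp (IsUnit.of_mul_eq_one (a := M.det) M'.det (by linarith [mul_comm M'.det M.det]))
    exact this
  -- ψ gB
  obtain ⟨xb, mb, eb, hB⟩ : ∃ p m e, ψ (gB A hdet k) = mk3 A hdet k p m e :=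
    ⟨_, _, _, mk3_surj A hdet k _⟩
  have hBsq : ψ (gB A hdet k) * ψ (gB A hdet k) = 1 := by
    rw [← _root_.map_mul, rel_BB, _root_.map_one]
  have hBform : ψ (gB A hdet k) = mk3 A hdet k xb 0 1 := by
    rcases zmod2_cases eb with he | he <;> subst he
    · exfalso
      rw [hB, mul0, ← mk3_one A hdet k] at hBsq
      obtain ⟨h1, h2, _⟩ := mk3_inj A hdet k hBsq
      have hmb : mb = 0 := by omega
      subst hmb
      rw [P_zero, Matrix.one_mulVec] at h1
      have hxb : xb = 0 := by
        funext i
        have := congrFun h1 i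
        simp only [Pi.add_apply, Pi.zero_apply] at this ⊢
        linarith
      subst hxb
      rw [mk3_one] at hB
      exact gB_ne_one A hdet k (ψ.injective (by rw [hB, _root_.map_one]))
    · rw [hB, mul1, ← mk3_one A hdet k] at hBsq
      obtain ⟨_, h2, _⟩ := mk3_inj A hdet k hBsq
      have hmb : mb = 0 := by omega
      subst hmb
      exact hB
  -- ψ gT
  obtain ⟨pt, mt, et, hT⟩ : ∃ p m e, ψ (gT A hdet k) = mk3 A hdet k p m e :=
    ⟨_, _, _, mk3_surj A hdet k _⟩
  -- mt = ±1
  have hmt : mt = 1 ∨ mt = -1 := by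
    set h := ψ.symm (gT A hdet k) with hh
    have hψh : ψ h = gT A hdet k := ψ.apply_symm_apply _
    obtain ⟨u, j, l, hrep⟩ : ∃ u j l, h = mk3 A hdet k u j l :=
      ⟨_, _, _, mk3_surj A hdet k h⟩
    have hprod : gT A hdet k
        = ψ (gA A hdet k u) * (ψ (gT A hdet k)) ^ j * ψ (inr (ofAdd l)) :=
      calc gT A hdet k = ψ h := hψh.symm
        _ = _ := by rw [hrep, mk3_eq_prod, _root_.map_mul, _root_.map_mul, map_zpow]
    have hz := congrArg (fun y => (zcH A hdet k y).toAdd) hprod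
    simp only [_root_.map_mul, map_zpow, toAdd_mul] at hz
    rw [show zcH A hdet k (gT A hdet k) = ofAdd 1 by rw [gT_eq_mk3, zcH_mk3]] at hz
    rw [hM u, show zcH A hdet k (gA A hdet k (M *ᵥ u)) = ofAdd 0 by
      rw [gA_eq_mk3, zcH_mk3]] at hz
    rw [hT, zcH_mk3] at hz
    have hl : zcH A hdet k (ψ (inr (ofAdd l))) = ofAdd 0 := by
      rcases zmod2_cases l with hl0 | hl0 <;> subst hl0
      · rw [show (inr (ofAdd (0:ZMod 2)) : Ggrp A hdet k) = 1 from rfl, _root_.map_one,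
          _root_.map_one]
        rfl
      · rw [show (inr (ofAdd (1:ZMod 2)) : Ggrp A hdet k) = gB A hdet k from rfl, hBform,
          zcH_mk3]
    rw [hl] at hz
    have hz2 : (1 : ℤ) = j * mt := by
      simpa [toAdd_zpow] using hz
    have : IsUnit mt := IsUnit.of_mul_eq_one (a := mt) j (by linarith)
    exact Int.isUnit_iff.mp this
  -- conj relation
  have hconj : ∀ v, ψ (gT A hdet k) * gA A hdet k (M *ᵥ v)
      = gA A hdet k (M *ᵥ (A *ᵥ v)) * ψ (gT A hdet k) := by
    intro v
    have h1 := congrArg ψ (rel_TA A hdet k v)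
    rw [_root_.map_mul, _root_.map_mul, hM, hM] at h1
    exact h1
  -- et = 0
  have het : et = 0 := by
    rcases zmod2_cases et with he | he
    · exact he
    · exfalso
      subst he
      have hmat : -(P A hdet mt * M) = M * A := by
        apply matrix_eq_of_mulVec
        intro v
        have h1 := hconj v
        rw [hT] at h1
        rw [show mk3 A hdet k pt mt 1 * gA A hdet k (M *ᵥ v)
            = gA A hdet k (-(P A hdet mt *ᵥ (M *ᵥ v))) * mk3 A hdet k pt mt 1 by
          rw [gA_eq_mk3, gA_eq_mk3, mul1, mul0, ccv_zero]
          congr 1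
          · rw [add_zero, P_zero, Matrix.one_mulVec, Matrix.mulVec_neg]
            abel
          · ring] at h1
        have h2 := mul_right_cancel h1
        have h3 := gA_inj A hdet k h2
        rw [Matrix.neg_mulVec]
        simp only [← Matrix.mulVec_mulVec]
        exact h3
      have htr0 : A.trace = -(A.trace) := by
        have t1 : (M * A * M').trace = A.trace := by
          rw [Matrix.trace_mul_comm, ← mul_assoc, hM'M, one_mul]
        have t2 : M * A * M' = -(P A hdet mt) := by
          rw [← hmat, neg_mul, mul_assoc, hMM', mul_one]
        have t3 : (-(P A hdet mt)).trace = -(sq A hdet mt) := by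
          rw [Matrix.trace_neg, sq]
        have t4 : sq A hdet mt = A.trace := by
          rcases hmt with h | h <;> subst h
          · exact sq_one A hdet
          · rw [show (-1 : ℤ) = -(1:ℤ) from rfl, sq_neg, sq_one]
        rw [t2, t3, t4] at t1
        linarith
      linarith
  subst het
  -- matrix relation
  have hmat : P A hdet mt * M = M * A := by
    apply matrix_eq_of_mulVec
    intro v
    have h1 := hconj v
    rw [hT] at h1
    rw [show mk3 A hdet k pt mt 0 * gA A hdet k (M *ᵥ v)
        = gA A hdet k (P A hdet mt *ᵥ (M *ᵥ v)) * mk3 A hdet k pt mt 0 by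
      rw [gA_eq_mk3, gA_eq_mk3, mul0, mul0, P_zero]
      congr 1
      · rw [Matrix.one_mulVec]
        abel
      · ring] at h1
    have h2 := mul_right_cancel h1
    have h3 := gA_inj A hdet k h2
    simp only [← Matrix.mulVec_mulVec]
    exact h3
  -- 2p relation
  have hBTeq := congrArg ψ (rel_BT A hdet k)
  rw [_root_.map_mul, _root_.map_mul, _root_.map_mul, hM, hT, hBform] at hBTeq
  rw [show mk3 A hdet k xb 0 1 * mk3 A hdet k pt mt 0
      = mk3 A hdet k (xb + (-pt + ccv A hdet k mt)) mt 1 by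
    rw [mul1, P_zero, Matrix.one_mulVec]
    congr 1 <;> ring] at hBTeq
  rw [show gA A hdet k (M *ᵥ k) * mk3 A hdet k pt mt 0 * mk3 A hdet k xb 0 1
      = mk3 A hdet k (M *ᵥ k + pt + P A hdet mt *ᵥ xb) mt 1 by
    rw [gA_eq_mk3, mul0, mul0, P_zero, Matrix.one_mulVec]
    congr 1 <;> ring] at hBTeq
  have hvec := (mk3_inj A hdet k hBTeq).1
  refine ⟨M, pt, xb, mt, hmt, hM, by rw [hT, mk3_xm0], by rw [hBform, mk3_x01], hdetM, ?_, ?_⟩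
  · intro hε1
    rw [hε1] at hmat hvec
    constructor
    · rw [← hmat, P_one]
    · rw [ccv_one] at hvec
      rw [P_one] at hvec
      funext i
      have := congrFun hvec i
      simp only [Pi.add_apply, Pi.neg_apply, Pi.smul_apply, smul_eq_mul, Matrix.sub_mulVec,
        Matrix.one_mulVec, Pi.sub_apply] at this ⊢
      linarith
  · intro hε1
    rw [hε1] at hmat hvec
    constructor
    · rw [← hmat, P_neg_one_inv]
    · rw [ccv_negone, P_neg_one_inv] at hvec
      funext i
      have := congrFun hvec i
      simp only [Pi.add_apply, Pi.neg_apply, Pi.smul_apply, smul_eq_mul, Matrix.sub_mulVec,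
        Matrix.add_mulVec, Matrix.one_mulVec, Pi.sub_apply] at this ⊢
      linarith

end S3
namespace S3

variable (A : Mat) (hdet : A.det = 1) (k : Vz)

lemma colMat_eq (M : Mat) : colMat (M *ᵥ e0) (M *ᵥ e1) = M := by
  ext i j
  fin_cases i <;> fin_cases j <;> simp [colMat, e0, e1]

include hdet in
lemma main1 (htr : 2 < A.trace) (φ : Pi1 A k ≃* Pi1 A k) :
    ∃ (n₁ n₂ p x : Fin 2 → ℤ) (ε : ℤ),
      (ε = 1 ∨ ε = -1) ∧
      φ (PresentedGroup.of Gen1.a1) = aP A k n₁ ∧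
      φ (PresentedGroup.of Gen1.a2) = aP A k n₂ ∧
      φ (PresentedGroup.of Gen1.t) = aP A k p * (PresentedGroup.of Gen1.t) ^ ε ∧
      φ (PresentedGroup.of Gen1.b) = aP A k x * PresentedGroup.of Gen1.b ∧
      ((colMat n₁ n₂).det = 1 ∨ (colMat n₁ n₂).det = -1) ∧
      (ε = 1 → A * colMat n₁ n₂ = colMat n₁ n₂ * A ∧
        (2 : ℤ) • p = (1 - A).mulVec x + (1 - colMat n₁ n₂).mulVec k) ∧
      (ε = -1 → A⁻¹ * colMat n₁ n₂ = colMat n₁ n₂ * A ∧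
        (2 : ℤ) • p = (1 - A⁻¹).mulVec x - (A⁻¹ + colMat n₁ n₂).mulVec k) := by
  set E := isoPG A hdet k with hE
  set ψ : Ggrp A hdet k ≃* Ggrp A hdet k := (E.symm.trans φ).trans E with hψ
  obtain ⟨M, p, x, ε, hε, hMv, hT, hB, hdetM, h1, h2⟩ := classify A hdet k htr ψ
  have hphi : ∀ z : Pi1 A k, φ z = E.symm (ψ (E z)) := by
    intro z
    show φ z = E.symm (E (φ (E.symm (E z))))
    rw [E.symm_apply_apply, E.symm_apply_apply]
  have hEa1 : E (PresentedGroup.of Gen1.a1) = gA A hdet k e0 := toG_a1 A hdet k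
  have hEa2 : E (PresentedGroup.of Gen1.a2) = gA A hdet k e1 := toG_a2 A hdet k
  have hEt : E (PresentedGroup.of Gen1.t) = gT A hdet k := toG_t A hdet k
  have hEb : E (PresentedGroup.of Gen1.b) = gB A hdet k := toG_b A hdet k
  have hsymm_gA : ∀ v, E.symm (gA A hdet k v) = aP A k v := by
    intro v
    rw [isoPG_symm_apply, fromG_gA]
    rfl
  refine ⟨M *ᵥ e0, M *ᵥ e1, p, x, ε, hε, ?_, ?_, ?_, ?_, ?_, ?_, ?_⟩
  · rw [hphi, hEa1, hMv, hsymm_gA]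
  · rw [hphi, hEa2, hMv, hsymm_gA]
  · rw [hphi, hEt, hT, _root_.map_mul, map_zpow, hsymm_gA, isoPG_symm_apply, fromG_gT]
    rfl
  · rw [hphi, hEb, hB, _root_.map_mul, hsymm_gA, isoPG_symm_apply, fromG_gB]
    rfl
  · rw [colMat_eq]
    exact hdetM
  · rw [colMat_eq]
    exact h1
  · rw [colMat_eq]
    exact h2

end S3
/-- Lemma on automorphisms of `Π₁(k)`. -/
theorem stmt3 (A : Matrix (Fin 2) (Fin 2) ℤ) (hdet : A.det = 1) (htr : 2 < A.trace)
    (k : Fin 2 → ℤ) (φ : Pi1 A k ≃* Pi1 A k) :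
    (∃ (n₁ n₂ p x : Fin 2 → ℤ) (ε : ℤ),
      (ε = 1 ∨ ε = -1) ∧
      φ (PresentedGroup.of Gen1.a1) = aP A k n₁ ∧
      φ (PresentedGroup.of Gen1.a2) = aP A k n₂ ∧
      φ (PresentedGroup.of Gen1.t) = aP A k p * (PresentedGroup.of Gen1.t) ^ ε ∧
      φ (PresentedGroup.of Gen1.b) = aP A k x * PresentedGroup.of Gen1.b ∧
      ((colMat n₁ n₂).det = 1 ∨ (colMat n₁ n₂).det = -1) ∧
      (ε = 1 → A * colMat n₁ n₂ = colMat n₁ n₂ * A ∧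
        (2 : ℤ) • p = (1 - A).mulVec x + (1 - colMat n₁ n₂).mulVec k) ∧
      (ε = -1 → A⁻¹ * colMat n₁ n₂ = colMat n₁ n₂ * A ∧
        (2 : ℤ) • p = (1 - A⁻¹).mulVec x - (A⁻¹ + colMat n₁ n₂).mulVec k)) ∧
    Subgroup.map φ.toMonoidHom
        (Subgroup.closure {PresentedGroup.of Gen1.a1, PresentedGroup.of Gen1.a2,
          PresentedGroup.of Gen1.t})
      = Subgroup.closure {PresentedGroup.of Gen1.a1, PresentedGroup.of Gen1.a2,
          PresentedGroup.of Gen1.t} := by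
  refine ⟨S3.main1 A hdet k htr φ, ?_⟩
  set S : Subgroup (Pi1 A k) := Subgroup.closure {PresentedGroup.of Gen1.a1,
    PresentedGroup.of Gen1.a2, PresentedGroup.of Gen1.t} with hS
  have haP : ∀ n : Fin 2 → ℤ, aP A k n ∈ S := by
    intro n
    refine mul_mem (zpow_mem ?_ _) (zpow_mem ?_ _)
    · exact Subgroup.subset_closure (by simp)
    · exact Subgroup.subset_closure (by simp)
  have htm : (PresentedGroup.of Gen1.t : Pi1 A k) ∈ S :=
    Subgroup.subset_closure (by simp)
  have key : ∀ φ' : Pi1 A k ≃* Pi1 A k, Subgroup.map φ'.toMonoidHom S ≤ S := by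
    intro φ'
    obtain ⟨n₁, n₂, p, x, ε, hε, h1, h2, h3, h4, _⟩ := S3.main1 A hdet k htr φ'
    rw [hS, MonoidHom.map_closure]
    refine Subgroup.closure_le S |>.mpr ?_
    rintro y ⟨z, hz, rfl⟩
    rcases hz with rfl | rfl | rfl
    · show φ' _ ∈ S
      rw [h1]; exact haP n₁
    · show φ' _ ∈ S
      rw [h2]; exact haP n₂
    · show φ' _ ∈ S
      rw [h3]; exact mul_mem (haP p) (zpow_mem htm ε)
  refine le_antisymm (key φ) ?_
  have hcomp : φ.toMonoidHom.comp φ.symm.toMonoidHom = MonoidHom.id _ := by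
    refine MonoidHom.ext fun z => ?_
    exact φ.apply_symm_apply z
  calc S = Subgroup.map (φ.toMonoidHom.comp φ.symm.toMonoidHom) S := by
        rw [hcomp, Subgroup.map_id]
    _ = Subgroup.map φ.toMonoidHom (Subgroup.map φ.symm.toMonoidHom S) :=
        (Subgroup.map_map S _ _).symm
    _ ≤ Subgroup.map φ.toMonoidHom S := Subgroup.map_mono (key φ.symm)
end
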